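/- arXiv:1710.07278 — 6 statements merged into one kernel-verified Lean document; each statement's English description precedes it below -/
import Mathlib

section
/- Let μ, μ̄ ∈ R^D with μ_i = μ̄_i for all i ≤ i_0, where 1 ≤ i_0 ≤ D−1. Then for any stopping time τ with respect to the frequency filtration, R(μ̄,τ)² ≥ B²_{i_0}(μ̄) · (1 − R(μ,τ)² / V_{i_0+1}), where R(ν,τ)² = E_ν[‖μ̂^(τ) − ν‖²]. -/
open MeasureTheory ProbabilityTheory Real Finset Filter
open scoped NNReal ENNReal

/-! ### Auxiliary Gaussian computations -/

lemma tendsto_mul_exp_neg_sq_cocompact' :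
    Tendsto (fun x : ℝ => x * Real.exp (-x ^ 2 / 2)) (Filter.cocompact ℝ) (nhds 0) := by
  have h := tendsto_rpow_abs_mul_exp_neg_mul_sq_cocompact (a := (1:ℝ)/2) (by norm_num) 1
  refine squeeze_zero_norm (fun x => ?_) h
  rw [norm_mul, Real.norm_eq_abs, Real.norm_eq_abs, Real.abs_exp, Real.rpow_one]
  have : -x ^ 2 / 2 = -(1/2) * x ^ 2 := by ring
  rw [this]

lemma integrable_sq_mul_exp' : Integrable (fun x : ℝ => x ^ 2 * Real.exp (-x ^ 2 / 2)) := by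
  have h := integrable_rpow_mul_exp_neg_mul_sq (b := (1:ℝ)/2) (by norm_num) (s := 2) (by norm_num)
  have he : (fun x : ℝ => x ^ ((2:ℝ)) * Real.exp (-(1/2) * x ^ 2))
      = fun x : ℝ => x ^ 2 * Real.exp (-x ^ 2 / 2) := by
    funext x
    rw [show (2:ℝ) = ((2:ℕ):ℝ) by norm_num, Real.rpow_natCast]
    congr 1
    ring
  rw [← he]
  exact h

lemma integrable_exp_neg_sq_half' : Integrable (fun x : ℝ => Real.exp (-x ^ 2 / 2)) := by
  have h := integrable_exp_neg_mul_sq (b := (1:ℝ)/2) (by norm_num)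
  have he : (fun x : ℝ => Real.exp (-(1/2) * x ^ 2)) = fun x : ℝ => Real.exp (-x ^ 2 / 2) := by
    funext x; congr 1; ring
  rwa [he] at h

lemma integral_sq_mul_exp' : ∫ x : ℝ, x ^ 2 * Real.exp (-x ^ 2 / 2) = Real.sqrt (2 * π) := by
  have hu : ∀ x : ℝ, HasDerivAt (fun x : ℝ => x) 1 x := fun x => hasDerivAt_id x
  have hv : ∀ x : ℝ, HasDerivAt (fun x : ℝ => -Real.exp (-x ^ 2 / 2))
      (x * Real.exp (-x ^ 2 / 2)) x := by
    intro x
    have h1 : HasDerivAt (fun x : ℝ => -x ^ 2 / 2) (-x) x := by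
      have := ((hasDerivAt_pow 2 x).neg).div_const 2
      exact this.congr_deriv (by norm_num; ring)
    have := (h1.exp).neg
    exact this.congr_deriv (by ring)
  have htend : Tendsto (fun x : ℝ => x * -Real.exp (-x ^ 2 / 2)) (Filter.cocompact ℝ)
      (nhds 0) := by
    have := tendsto_mul_exp_neg_sq_cocompact'.neg
    simp only [neg_zero] at this
    convert this using 2 with x
    ring
  have hbot : Tendsto (fun x : ℝ => x * -Real.exp (-x ^ 2 / 2)) atBot (nhds 0) :=
    htend.mono_left (by rw [cocompact_eq_atBot_atTop]; exact le_sup_left)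
  have htop : Tendsto (fun x : ℝ => x * -Real.exp (-x ^ 2 / 2)) atTop (nhds 0) :=
    htend.mono_left (by rw [cocompact_eq_atBot_atTop]; exact le_sup_right)
  have huv' : Integrable (fun x : ℝ => x * (x * Real.exp (-x ^ 2 / 2))) := by
    convert integrable_sq_mul_exp' using 2 with x; ring
  have hu'v : Integrable (fun x : ℝ => (1:ℝ) * -Real.exp (-x ^ 2 / 2)) := by
    have h := integrable_exp_neg_sq_half'.neg
    have he : (fun x : ℝ => -Real.exp (-x ^ 2 / 2))
        = fun x : ℝ => (1:ℝ) * -Real.exp (-x ^ 2 / 2) := by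
      funext x; ring
    have h' : Integrable (fun x : ℝ => -Real.exp (-x ^ 2 / 2)) := h
    rwa [he] at h'
  have key := MeasureTheory.integral_mul_deriv_eq_deriv_mul (fun x _ => hu x) (fun x _ => hv x) huv' hu'v hbot htop
  have h2 : ∫ x : ℝ, (1:ℝ) * -Real.exp (-x ^ 2 / 2) = -Real.sqrt (2 * π) := by
    have hg := integral_gaussian (1/2 : ℝ)
    simp only [one_mul, integral_neg]
    rw [show (fun x : ℝ => Real.exp (-x ^ 2 / 2)) = fun x : ℝ => Real.exp (-(1/2) * x ^ 2) by
      funext x; congr 1; ring]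
    rw [hg, show π / (1/2 : ℝ) = 2 * π by ring]
  have h3 : (∫ x : ℝ, x * (x * Real.exp (-x ^ 2 / 2)))
      = ∫ x : ℝ, x ^ 2 * Real.exp (-x ^ 2 / 2) := by
    congr 1; funext x; ring
  rw [h3, h2] at key
  rw [key]; ring

lemma gaussianPDFReal_smul_sq (x : ℝ) :
    gaussianPDFReal 0 1 x * x ^ 2 = (Real.sqrt (2 * π))⁻¹ * (x ^ 2 * Real.exp (-x ^ 2 / 2)) := by
  simp only [gaussianPDFReal, NNReal.coe_one, mul_one, sub_zero, zero_sub]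
  ring_nf

lemma integrable_sq_gaussianReal : Integrable (fun x : ℝ => x ^ 2) (gaussianReal 0 1) := by
  rw [gaussianReal_of_var_ne_zero _ one_ne_zero]
  have hf : Measurable fun x : ℝ => Real.toNNReal (gaussianPDFReal 0 1 x) :=
    (measurable_gaussianPDFReal 0 1).real_toNNReal
  have hd : gaussianPDF 0 1 = fun x => ((Real.toNNReal (gaussianPDFReal 0 1 x) : ℝ≥0) : ℝ≥0∞) :=
    rfl
  rw [hd, integrable_withDensity_iff_integrable_smul hf]
  have : (fun x : ℝ => Real.toNNReal (gaussianPDFReal 0 1 x) • x ^ 2)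
      = fun x : ℝ => (Real.sqrt (2 * π))⁻¹ * (x ^ 2 * Real.exp (-x ^ 2 / 2)) := by
    funext x
    rw [NNReal.smul_def, smul_eq_mul, Real.coe_toNNReal _ (gaussianPDFReal_nonneg 0 1 x),
      gaussianPDFReal_smul_sq]
  rw [this]
  exact integrable_sq_mul_exp'.const_mul _

lemma integral_sq_gaussianReal : ∫ x, x ^ 2 ∂(gaussianReal 0 1) = 1 := by
  rw [gaussianReal_of_var_ne_zero _ one_ne_zero]
  have hf : Measurable fun x : ℝ => Real.toNNReal (gaussianPDFReal 0 1 x) :=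
    (measurable_gaussianPDFReal 0 1).real_toNNReal
  have hd : gaussianPDF 0 1 = fun x => ((Real.toNNReal (gaussianPDFReal 0 1 x) : ℝ≥0) : ℝ≥0∞) :=
    rfl
  rw [hd, integral_withDensity_eq_integral_smul hf]
  have : (fun x : ℝ => Real.toNNReal (gaussianPDFReal 0 1 x) • x ^ 2)
      = fun x : ℝ => (Real.sqrt (2 * π))⁻¹ * (x ^ 2 * Real.exp (-x ^ 2 / 2)) := by
    funext x
    rw [NNReal.smul_def, smul_eq_mul, Real.coe_toNNReal _ (gaussianPDFReal_nonneg 0 1 x),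
      gaussianPDFReal_smul_sq]
  rw [this, integral_const_mul, integral_sq_mul_exp']
  rw [inv_mul_cancel₀]
  positivity

section Aux

variable {Ω : Type*} [MeasurableSpace Ω]

lemma integrable_sq_of_gaussian {P : Measure Ω} {X : Ω → ℝ} (hX : Measurable X)
    (hg : Measure.map X P = gaussianReal 0 1) :
    Integrable (fun ω => X ω ^ 2) P := by
  have h1 : Integrable (fun x : ℝ => x ^ 2) (Measure.map X P) := by
    rw [hg]; exact integrable_sq_gaussianReal
  have h2 := (integrable_map_measure
    ((measurable_id.pow_const 2).aestronglyMeasurable) hX.aemeasurable).1 h1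
  exact h2

lemma integral_sq_of_gaussian {P : Measure Ω} {X : Ω → ℝ} (hX : Measurable X)
    (hg : Measure.map X P = gaussianReal 0 1) :
    ∫ ω, X ω ^ 2 ∂P = 1 := by
  have h : ∫ x, x ^ 2 ∂(Measure.map X P) = ∫ ω, X ω ^ 2 ∂P :=
    integral_map hX.aemeasurable ((measurable_id.pow_const 2).aestronglyMeasurable)
  rw [← h, hg, integral_sq_gaussianReal]

/-- The data vector. -/
noncomputable def auxY (D : ℕ) (lam : ℕ → ℝ) (δ : ℝ) (ε : ℕ → Ω → ℝ) (ν : ℕ → ℝ)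
    (ω : Ω) : ℕ → ℝ :=
  fun j => if 1 ≤ j ∧ j ≤ D then lam j * ν j + δ * ε j ω else 0

/-- The pointwise loss of coordinate `i`. -/
noncomputable def auxG (D : ℕ) (lam : ℕ → ℝ) (δ : ℝ) (ε : ℕ → Ω → ℝ) (τ : (ℕ → ℝ) → ℕ)
    (ν : ℕ → ℝ) (i : ℕ) (ω : Ω) : ℝ :=
  if i ≤ τ (auxY D lam δ ε ν ω) then (δ * ε i ω / lam i) ^ 2 else ν i ^ 2

lemma auxG_nonneg (D : ℕ) (lam : ℕ → ℝ) (δ : ℝ) (ε : ℕ → Ω → ℝ) (τ : (ℕ → ℝ) → ℕ)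
    (ν : ℕ → ℝ) (i : ℕ) (ω : Ω) : 0 ≤ auxG D lam δ ε τ ν i ω := by
  unfold auxG; split <;> positivity

lemma auxY_measurable (D : ℕ) (lam : ℕ → ℝ) (δ : ℝ) (ε : ℕ → Ω → ℝ)
    (hεmeas : ∀ i, Measurable (ε i)) (ν : ℕ → ℝ) :
    Measurable (auxY D lam δ ε ν) := by
  apply measurable_pi_lambda
  intro j
  unfold auxY
  by_cases h : 1 ≤ j ∧ j ≤ D
  · simp only [if_pos h]
    exact measurable_const.add (measurable_const.mul (hεmeas j))
  · simp only [if_neg h]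
    exact measurable_const

end Aux

/-- The risk `R(ν,τ)² = E_ν[‖μ̂^(τ) − ν‖²]` of the truncated SVD estimator with a
data-dependent truncation rule `τ`, in the Gaussian sequence model
`Y_i = λ_i ν_i + δ ε_i`, `i = 1, …, D` (data outside `{1,…,D}` is set to `0`). -/
noncomputable def svdRisk {Ω : Type*} [MeasurableSpace Ω] (P : Measure Ω) (D : ℕ)
    (lam : ℕ → ℝ) (δ : ℝ) (ε : ℕ → Ω → ℝ) (τ : (ℕ → ℝ) → ℕ) (ν : ℕ → ℝ) : ℝ :=
  ∫ ω, ∑ i ∈ Finset.Icc 1 D,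
    ((if i ≤ τ (fun j => if 1 ≤ j ∧ j ≤ D then lam j * ν j + δ * ε j ω else 0)
        then (lam i)⁻¹ * (lam i * ν i + δ * ε i ω) else 0) - ν i) ^ 2 ∂P

lemma svdRisk_eq {Ω : Type*} [MeasurableSpace Ω] (P : Measure Ω) (D : ℕ)
    (lam : ℕ → ℝ) (δ : ℝ) (ε : ℕ → Ω → ℝ) (τ : (ℕ → ℝ) → ℕ) (ν : ℕ → ℝ)
    (hlam_pos : ∀ i, 1 ≤ i → i ≤ D → 0 < lam i) :
    svdRisk P D lam δ ε τ ν = ∫ ω, ∑ i ∈ Finset.Icc 1 D, auxG D lam δ ε τ ν i ω ∂P := by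
  unfold svdRisk auxG auxY
  refine integral_congr_ae (Filter.Eventually.of_forall fun ω => ?_)
  refine Finset.sum_congr rfl fun i hi => ?_
  rw [Finset.mem_Icc] at hi
  have hne : lam i ≠ 0 := (hlam_pos i hi.1 hi.2).ne'
  split_ifs with h
  · field_simp
    ring
  · ring

/-- two-point lower bound for stopping times of the frequency
filtration: if `μ_i = μ̄_i` for `i ≤ i₀` then
`R(μ̄,τ)² ≥ B²_{i₀}(μ̄) (1 − R(μ,τ)²/V_{i₀+1})`. -/
theorem frequency_two_point_lower_bound
    {Ω : Type*} [MeasurableSpace Ω] (P : Measure Ω) [IsProbabilityMeasure P]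
    (D : ℕ) (lam μ μbar : ℕ → ℝ) (δ : ℝ) (hδ : 0 < δ)
    (hlam_pos : ∀ i, 1 ≤ i → i ≤ D → 0 < lam i)
    (hlam_mono : ∀ i j, 1 ≤ i → i ≤ j → j ≤ D → lam j ≤ lam i)
    (ε : ℕ → Ω → ℝ) (hεmeas : ∀ i, Measurable (ε i))
    (hεindep : iIndepFun ε P)
    (hεgauss : ∀ i, Measure.map (ε i) P = gaussianReal 0 1)
    (τ : (ℕ → ℝ) → ℕ) (hτD : ∀ y, τ y ≤ D)
    (hstop : ∀ n : ℕ,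
      MeasurableSet[MeasurableSpace.comap
        (fun (y : ℕ → ℝ) (i : ℕ) => if 1 ≤ i ∧ i ≤ n then y i else 0) inferInstance]
        {y : ℕ → ℝ | τ y ≤ n})
    (i0 : ℕ) (hi0 : 1 ≤ i0) (hi0D : i0 ≤ D - 1)
    (hagree : ∀ i, 1 ≤ i → i ≤ i0 → μ i = μbar i) :
    svdRisk P D lam δ ε τ μbar
      ≥ (∑ i ∈ Finset.Icc (i0 + 1) D, (μbar i) ^ 2)
        * (1 - svdRisk P D lam δ ε τ μ
              / (δ ^ 2 * ∑ i ∈ Finset.Icc 1 (i0 + 1), ((lam i)⁻¹) ^ 2)) := by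
  classical
  have hi0D' : i0 + 1 ≤ D := by omega
  have hD1 : 1 ≤ D := by omega
  -- basic measurability facts
  have hτle : ∀ (ν : ℕ → ℝ) (n : ℕ),
      MeasurableSet {ω | τ (auxY D lam δ ε ν ω) ≤ n} := by
    intro ν n
    have htrunc : Measurable (fun (y : ℕ → ℝ) (i : ℕ) => if 1 ≤ i ∧ i ≤ n then y i else 0) := by
      apply measurable_pi_lambda
      intro i
      by_cases h : 1 ≤ i ∧ i ≤ n
      · simp only [if_pos h]; exact measurable_pi_apply i
      · simp only [if_neg h]; exact measurable_const
    have h1 : MeasurableSet {y : ℕ → ℝ | τ y ≤ n} := htrunc.comap_le _ (hstop n)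
    exact (auxY_measurable D lam δ ε hεmeas ν) h1
  have hτge : ∀ (ν : ℕ → ℝ) (i : ℕ), 1 ≤ i →
      MeasurableSet {ω | i ≤ τ (auxY D lam δ ε ν ω)} := by
    intro ν i hi
    have h : {ω | i ≤ τ (auxY D lam δ ε ν ω)}
        = {ω | τ (auxY D lam δ ε ν ω) ≤ i - 1}ᶜ := by
      ext ω; simp only [Set.mem_setOf_eq, Set.mem_compl_iff, not_le]; omega
    rw [h]
    exact (hτle ν (i - 1)).compl
  have hεsq_int : ∀ i, Integrable (fun ω => ε i ω ^ 2) P :=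
    fun i => integrable_sq_of_gaussian (hεmeas i) (hεgauss i)
  have hεsq_integral : ∀ i, ∫ ω, ε i ω ^ 2 ∂P = 1 :=
    fun i => integral_sq_of_gaussian (hεmeas i) (hεgauss i)
  -- integrability of the summand and the sum
  have hGmeas : ∀ (ν : ℕ → ℝ) (i : ℕ), 1 ≤ i → Measurable (auxG D lam δ ε τ ν i) := by
    intro ν i hi
    unfold auxG
    exact Measurable.ite (hτge ν i hi)
      (((measurable_const.mul (hεmeas i)).div_const _).pow_const 2) measurable_const
  have hGint : ∀ (ν : ℕ → ℝ) (i : ℕ), 1 ≤ i → Integrable (auxG D lam δ ε τ ν i) P := by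
    intro ν i hi
    refine Integrable.mono' (((hεsq_int i).const_mul ((δ / lam i) ^ 2)).add
      (integrable_const (ν i ^ 2))) ((hGmeas ν i hi).aestronglyMeasurable)
      (Filter.Eventually.of_forall fun ω => ?_)
    rw [Real.norm_eq_abs, abs_of_nonneg (auxG_nonneg D lam δ ε τ ν i ω)]
    simp only [Pi.add_apply]
    unfold auxG
    split_ifs with h
    · have h1 : (δ * ε i ω / lam i) ^ 2 = (δ / lam i) ^ 2 * ε i ω ^ 2 := by ring
      rw [h1]
      nlinarith [sq_nonneg (ν i)]
    · nlinarith [mul_nonneg (sq_nonneg (δ / lam i)) (sq_nonneg (ε i ω))]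
  have hsum_int : ∀ ν : ℕ → ℝ,
      Integrable (fun ω => ∑ i ∈ Finset.Icc 1 D, auxG D lam δ ε τ ν i ω) P := by
    intro ν
    exact integrable_finset_sum _ (fun i hi => hGint ν i (Finset.mem_Icc.1 hi).1)
  -- the stopping events for μ and μbar agree up to i0
  have hYagree : ∀ ω j, 1 ≤ j → j ≤ i0 → auxY D lam δ ε μ ω j = auxY D lam δ ε μbar ω j := by
    intro ω j h1 h2
    unfold auxY
    by_cases h : 1 ≤ j ∧ j ≤ D
    · simp only [if_pos h, hagree j h1 h2]
    · simp only [if_neg h]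
  have hTeq : ∀ ω, τ (auxY D lam δ ε μ ω) ≤ i0 ↔ τ (auxY D lam δ ε μbar ω) ≤ i0 := by
    intro ω
    obtain ⟨S, hS, hSeq⟩ := MeasurableSpace.measurableSet_comap.1 (hstop i0)
    have hmem : ∀ y : ℕ → ℝ, τ y ≤ i0 ↔ (fun i => if 1 ≤ i ∧ i ≤ i0 then y i else 0) ∈ S := by
      intro y
      constructor
      · intro h
        have : y ∈ {y : ℕ → ℝ | τ y ≤ i0} := h
        rw [← hSeq] at this
        exact this
      · intro h
        have : y ∈ (fun (y : ℕ → ℝ) (i : ℕ) => if 1 ≤ i ∧ i ≤ i0 then y i else 0) ⁻¹' S := h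
        rw [hSeq] at this
        exact this
    rw [hmem, hmem]
    have : (fun i => if 1 ≤ i ∧ i ≤ i0 then auxY D lam δ ε μ ω i else 0)
        = (fun i => if 1 ≤ i ∧ i ≤ i0 then auxY D lam δ ε μbar ω i else 0) := by
      funext j
      by_cases h : 1 ≤ j ∧ j ≤ i0
      · simp only [if_pos h, hYagree ω j h.1 h.2]
      · simp only [if_neg h]
    rw [this]
  -- the probability p
  set p : ℝ := (P {ω | τ (auxY D lam δ ε μ ω) ≤ i0}).toReal with hp_def
  have hp0 : 0 ≤ p := ENNReal.toReal_nonneg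
  have hp1 : p ≤ 1 := by
    rw [hp_def]
    rw [← ENNReal.toReal_one]
    exact ENNReal.toReal_mono ENNReal.one_ne_top prob_le_one
  set B2 : ℝ := ∑ i ∈ Finset.Icc (i0 + 1) D, (μbar i) ^ 2 with hB2_def
  have hB2 : 0 ≤ B2 := Finset.sum_nonneg fun i _ => sq_nonneg _
  set V : ℝ := δ ^ 2 * ∑ i ∈ Finset.Icc 1 (i0 + 1), ((lam i)⁻¹) ^ 2 with hV_def
  have hV : 0 < V := by
    rw [hV_def]
    apply mul_pos (by positivity)
    apply Finset.sum_pos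
    · intro i hi
      rw [Finset.mem_Icc] at hi
      have := hlam_pos i hi.1 (le_trans hi.2 hi0D')
      positivity
    · exact ⟨1, Finset.mem_Icc.2 ⟨le_refl 1, by omega⟩⟩
  -- Step 1: svdRisk μbar ≥ B2 * p
  have step1 : B2 * p ≤ svdRisk P D lam δ ε τ μbar := by
    rw [svdRisk_eq P D lam δ ε τ μbar hlam_pos]
    set A : Set Ω := {ω | τ (auxY D lam δ ε μbar ω) ≤ i0} with hA_def
    have hA : MeasurableSet A := hτle μbar i0
    have hPA : (P A).toReal = p := by
      rw [hp_def]
      congr 1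
      apply congrArg
      ext ω
      exact (hTeq ω).symm
    have hpt : ∀ ω, Set.indicator A (fun _ => B2) ω
        ≤ ∑ i ∈ Finset.Icc 1 D, auxG D lam δ ε τ μbar i ω := by
      intro ω
      by_cases hω : ω ∈ A
      · rw [Set.indicator_of_mem hω]
        have hB2eq : B2 = ∑ i ∈ Finset.Icc (i0 + 1) D, auxG D lam δ ε τ μbar i ω := by
          rw [hB2_def]
          refine Finset.sum_congr rfl fun i hi => ?_
          rw [Finset.mem_Icc] at hi
          have hτω : τ (auxY D lam δ ε μbar ω) ≤ i0 := hω
          unfold auxG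
          rw [if_neg (by omega)]
        rw [hB2eq]
        refine Finset.sum_le_sum_of_subset_of_nonneg
          (Finset.Icc_subset_Icc (by omega) le_rfl)
          (fun i _ _ => auxG_nonneg D lam δ ε τ μbar i ω)
      · rw [Set.indicator_of_notMem hω]
        exact Finset.sum_nonneg fun i _ => auxG_nonneg D lam δ ε τ μbar i ω
    calc B2 * p = (P A).toReal • B2 := by rw [hPA, smul_eq_mul, mul_comm]
      _ = ∫ ω, Set.indicator A (fun _ => B2) ω ∂P := (integral_indicator_const B2 hA).symm
      _ ≤ ∫ ω, ∑ i ∈ Finset.Icc 1 D, auxG D lam δ ε τ μbar i ω ∂P :=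
          integral_mono ((integrable_const B2).indicator hA) (hsum_int μbar)
            (fun ω => hpt ω)
  -- Step 2: svdRisk μ ≥ V * (1 - p)
  have step2 : V * (1 - p) ≤ svdRisk P D lam δ ε τ μ := by
    rw [svdRisk_eq P D lam δ ε τ μ hlam_pos]
    set B : ℕ → Set Ω := fun i => {ω | i ≤ τ (auxY D lam δ ε μ ω)} with hB_def
    set K : ℕ → Ω → ℝ := fun i ω =>
      (δ / lam i) ^ 2 * Set.indicator (B i) (fun ω => ε i ω ^ 2) ω with hK_def
    -- per coordinate, the integral of K equals (δ/λᵢ)² P(Bᵢ)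
    have hKint : ∀ i, 1 ≤ i → Integrable (K i) P := by
      intro i hi
      exact (((hεsq_int i).indicator (hτge μ i hi)).const_mul _)
    have hKeq : ∀ i, 1 ≤ i → ∫ ω, K i ω ∂P = (δ / lam i) ^ 2 * (P (B i)).toReal := by
      intro i hi
      -- independence of the indicator and ε i ^ 2
      obtain ⟨S, hS, hSeq⟩ := MeasurableSpace.measurableSet_comap.1 (hstop (i - 1))
      have hmem : ∀ y : ℕ → ℝ,
          τ y ≤ i - 1 ↔ (fun j => if 1 ≤ j ∧ j ≤ i - 1 then y j else 0) ∈ S := by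
        intro y
        constructor
        · intro h
          have : y ∈ {y : ℕ → ℝ | τ y ≤ i - 1} := h
          rw [← hSeq] at this
          exact this
        · intro h
          have : y ∈ (fun (y : ℕ → ℝ) (j : ℕ) =>
              if 1 ≤ j ∧ j ≤ i - 1 then y j else 0) ⁻¹' S := h
          rw [hSeq] at this
          exact this
      set g : (↥(Finset.range i) → ℝ) → (ℕ → ℝ) := fun x j =>
        if h : 1 ≤ j ∧ j ≤ i - 1 then
          (if j ≤ D then lam j * μ j + δ * x ⟨j, Finset.mem_range.mpr (by omega)⟩ else 0)
        else 0 with hg_def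
      have hgmeas : Measurable g := by
        apply measurable_pi_lambda
        intro j
        by_cases h : 1 ≤ j ∧ j ≤ i - 1
        · simp only [hg_def, dif_pos h]
          by_cases h2 : j ≤ D
          · simp only [if_pos h2]
            exact measurable_const.add (measurable_const.mul (measurable_pi_apply _))
          · simp only [if_neg h2]
            exact measurable_const
        · simp only [hg_def, dif_neg h]
          exact measurable_const
      have hcomp : ∀ ω, g (fun j : ↥(Finset.range i) => ε (↑j) ω)
          = fun j => if 1 ≤ j ∧ j ≤ i - 1 then auxY D lam δ ε μ ω j else 0 := by
        intro ω
        funext j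
        by_cases h : 1 ≤ j ∧ j ≤ i - 1
        · simp only [hg_def, dif_pos h, if_pos h]
          unfold auxY
          by_cases h2 : j ≤ D
          · rw [if_pos h2, if_pos (show 1 ≤ j ∧ j ≤ D from ⟨h.1, h2⟩)]
          · rw [if_neg h2, if_neg (show ¬(1 ≤ j ∧ j ≤ D) from fun hc => h2 hc.2)]
        · simp only [hg_def, dif_neg h, if_neg h]
      set χ : Ω → ℝ := fun ω => if i ≤ τ (auxY D lam δ ε μ ω) then (1:ℝ) else 0 with hχ_def
      have hχind : χ = Set.indicator (B i) (fun _ => (1:ℝ)) := by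
        funext ω
        rw [Set.indicator_apply]
        rfl
      set φ : (↥(Finset.range i) → ℝ) → ℝ :=
        fun x => if g x ∈ S then 0 else 1 with hφ_def
      have hφmeas : Measurable φ := Measurable.ite (hgmeas hS) measurable_const measurable_const
      set ψ : (↥({i} : Finset ℕ) → ℝ) → ℝ :=
        fun x => (x ⟨i, Finset.mem_singleton_self i⟩) ^ 2 with hψ_def
      have hψmeas : Measurable ψ := (measurable_pi_apply _).pow_const 2
      have hdisj : Disjoint (Finset.range i) ({i} : Finset ℕ) := by
        simp [Finset.disjoint_singleton_right]
      have hindep0 := hεindep.indepFun_finset (Finset.range i) {i} hdisj hεmeas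
      have hindep : IndepFun χ (fun ω => ε i ω ^ 2) P := by
        have hcomp2 := hindep0.comp hφmeas hψmeas
        have h1 : χ = φ ∘ (fun ω (j : ↥(Finset.range i)) => ε (↑j) ω) := by
          funext ω
          simp only [Function.comp_apply, hφ_def, hχ_def]
          rw [hcomp ω]
          by_cases hτω : τ (auxY D lam δ ε μ ω) ≤ i - 1
          · rw [if_pos ((hmem _).1 hτω), if_neg (by omega)]
          · rw [if_neg (fun hc => hτω ((hmem _).2 hc)), if_pos (by omega)]
        have h2 : (fun ω => ε i ω ^ 2)
            = ψ ∘ (fun ω (j : ↥({i} : Finset ℕ)) => ε (↑j) ω) := rfl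
        rw [h1, h2]
        exact hcomp2
      have hχint : Integrable χ P := by
        rw [hχind]
        exact (integrable_const (1:ℝ)).indicator (hτge μ i hi)
      have hχintegral : ∫ ω, χ ω ∂P = (P (B i)).toReal := by
        rw [hχind, integral_indicator_const (1:ℝ) (hτge μ i hi), smul_eq_mul, mul_one]
        rfl
      have hmul := hindep.integral_mul_eq_mul_integral hχint.aestronglyMeasurable (hεsq_int i).aestronglyMeasurable
      have hptK : K i = fun ω => (δ / lam i) ^ 2 * (χ * fun ω => ε i ω ^ 2) ω := by
        funext ω
        simp only [hK_def, Pi.mul_apply, hχ_def]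
        by_cases hω : i ≤ τ (auxY D lam δ ε μ ω)
        · have hωB : ω ∈ B i := hω
          rw [Set.indicator_of_mem hωB, if_pos hω]
          ring
        · have hωB : ω ∉ B i := hω
          rw [Set.indicator_of_notMem hωB, if_neg hω]
          ring
      rw [hptK]
      rw [integral_const_mul, hmul, hχintegral, hεsq_integral i, mul_one]
    -- the complement probability
    have hPB : ∀ i, 1 ≤ i → i ≤ i0 + 1 → 1 - p ≤ (P (B i)).toReal := by
      intro i hi hii0
      have hsub : B (i0 + 1) ⊆ B i := by
        intro ω hω
        simp only [hB_def, Set.mem_setOf_eq] at hω ⊢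
        omega
      have hcompl : B (i0 + 1) = {ω | τ (auxY D lam δ ε μ ω) ≤ i0}ᶜ := by
        ext ω
        simp only [hB_def, Set.mem_setOf_eq, Set.mem_compl_iff, not_le]
        omega
      have hPcompl : (P (B (i0 + 1))).toReal = 1 - p := by
        rw [hcompl, measure_compl (hτle μ i0) (measure_ne_top P _)]
        rw [measure_univ]
        rw [ENNReal.toReal_sub_of_le prob_le_one ENNReal.one_ne_top, ENNReal.toReal_one, hp_def]
      rw [← hPcompl]
      exact ENNReal.toReal_mono (measure_ne_top P _) (measure_mono hsub)
    -- pointwise bound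
    have hpt : ∀ ω, ∑ i ∈ Finset.Icc 1 (i0 + 1), K i ω
        ≤ ∑ i ∈ Finset.Icc 1 D, auxG D lam δ ε τ μ i ω := by
      intro ω
      have h1 : ∑ i ∈ Finset.Icc 1 (i0 + 1), K i ω
          ≤ ∑ i ∈ Finset.Icc 1 (i0 + 1), auxG D lam δ ε τ μ i ω := by
        refine Finset.sum_le_sum fun i hi => ?_
        simp only [hK_def, Set.indicator_apply]
        unfold auxG
        by_cases hω : ω ∈ B i
        · have : i ≤ τ (auxY D lam δ ε μ ω) := hω
          rw [if_pos hω, if_pos this]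
          apply le_of_eq
          ring
        · have : ¬ i ≤ τ (auxY D lam δ ε μ ω) := hω
          rw [if_neg hω, if_neg this]
          nlinarith [sq_nonneg (μ i), sq_nonneg (δ / lam i)]
      refine le_trans h1 ?_
      refine Finset.sum_le_sum_of_subset_of_nonneg
        (Finset.Icc_subset_Icc le_rfl hi0D')
        (fun i _ _ => auxG_nonneg D lam δ ε τ μ i ω)
    -- integrate
    have hint_sum : ∫ ω, ∑ i ∈ Finset.Icc 1 (i0 + 1), K i ω ∂P
        = ∑ i ∈ Finset.Icc 1 (i0 + 1), (δ / lam i) ^ 2 * (P (B i)).toReal := by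
      rw [integral_finset_sum _ (fun i hi => hKint i (Finset.mem_Icc.1 hi).1)]
      exact Finset.sum_congr rfl fun i hi => hKeq i (Finset.mem_Icc.1 hi).1
    have hVle : V * (1 - p)
        ≤ ∑ i ∈ Finset.Icc 1 (i0 + 1), (δ / lam i) ^ 2 * (P (B i)).toReal := by
      have hVeq : V * (1 - p) = ∑ i ∈ Finset.Icc 1 (i0 + 1), (δ / lam i) ^ 2 * (1 - p) := by
        rw [hV_def, Finset.mul_sum, Finset.sum_mul]
        refine Finset.sum_congr rfl fun i hi => ?_
        ring
      rw [hVeq]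
      refine Finset.sum_le_sum fun i hi => ?_
      rw [Finset.mem_Icc] at hi
      exact mul_le_mul_of_nonneg_left (hPB i hi.1 hi.2) (sq_nonneg _)
    calc V * (1 - p)
        ≤ ∑ i ∈ Finset.Icc 1 (i0 + 1), (δ / lam i) ^ 2 * (P (B i)).toReal := hVle
      _ = ∫ ω, ∑ i ∈ Finset.Icc 1 (i0 + 1), K i ω ∂P := hint_sum.symm
      _ ≤ ∫ ω, ∑ i ∈ Finset.Icc 1 D, auxG D lam δ ε τ μ i ω ∂P :=
          integral_mono
            (integrable_finset_sum _ (fun i hi => hKint i (Finset.mem_Icc.1 hi).1))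
            (hsum_int μ) (fun ω => hpt ω)
  -- Final algebra
  rw [ge_iff_le]
  have h1 : 1 - svdRisk P D lam δ ε τ μ / V ≤ p := by
    have h2 : (1 - p) ≤ svdRisk P D lam δ ε τ μ / V :=
      (le_div_iff₀ hV).mpr (by linarith [step2, mul_comm (1 - p) V])
    linarith
  calc B2 * (1 - svdRisk P D lam δ ε τ μ / V)
      ≤ B2 * p := mul_le_mul_of_nonneg_left h1 hB2
    _ ≤ svdRisk P D lam δ ε τ μbar := step1
end

section
/- For nonnegative weights a_1,…,a_D and i.i.d. standard Gaussians ε_1,…,ε_D, for every x > 0: P( Σ_{i=1}^D a_i (ε_i² − 1) < −2‖a‖√x ) < e^{−x}, where ‖a‖ denotes the Euclidean norm of (a_1,…,a_D). -/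
open MeasureTheory ProbabilityTheory Real Finset

/-- Key strict inequality: `exp(u - u²/2) < 1 + u` for `u > 0`. -/
lemma LM_exp_lt (u : ℝ) (hu : 0 < u) : Real.exp (u - u ^ 2 / 2) < 1 + u := by
  set g : ℝ → ℝ := fun u => (1 + u) * Real.exp (u ^ 2 / 2 - u) with hg_def
  have hg : ∀ v : ℝ, HasDerivAt g (v ^ 2 * Real.exp (v ^ 2 / 2 - v)) v := by
    intro v
    have h1 : HasDerivAt (fun w : ℝ => w ^ 2 / 2 - w) (v - 1) v := by
      have := ((hasDerivAt_pow 2 v).div_const 2).fun_sub (hasDerivAt_id' v)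
      simpa using this
    have h2 := h1.exp
    have h3 : HasDerivAt (fun w : ℝ => 1 + w) 1 v := by
      simpa using (hasDerivAt_id v).const_add (1 : ℝ)
    have := h3.fun_mul h2
    refine this.congr_deriv ?_
    ring
  have hmono : StrictMonoOn g (Set.Ici (0 : ℝ)) := by
    refine strictMonoOn_of_deriv_pos (convex_Ici 0) ?_ ?_
    · exact (by fun_prop : Continuous g).continuousOn
    · intro v hv
      rw [interior_Ici] at hv
      rw [(hg v).deriv]
      have : 0 < v := hv
      positivity
  have h01 : (1 : ℝ) < g u := by
    have := hmono (Set.self_mem_Ici) (Set.mem_Ici.mpr hu.le) hu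
    simpa [hg_def] using this
  have hE : 0 < Real.exp (u ^ 2 / 2 - u) := Real.exp_pos _
  have hinv : Real.exp (u - u ^ 2 / 2) * Real.exp (u ^ 2 / 2 - u) = 1 := by
    rw [← Real.exp_add]; ring_nf; exact Real.exp_zero
  have hmul : Real.exp (u - u ^ 2 / 2) * Real.exp (u ^ 2 / 2 - u)
      < (1 + u) * Real.exp (u ^ 2 / 2 - u) := by rw [hinv]; exact h01
  exact lt_of_mul_lt_mul_right hmul hE.le

/-- The factor bound: `e^c / √(1+2c) < e^{c²}` for `c > 0`. -/
lemma LM_factor_lt (c : ℝ) (hc : 0 < c) :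
    Real.exp c * (Real.sqrt (1 + 2 * c))⁻¹ < Real.exp (c ^ 2) := by
  have h1 : Real.exp (2 * c - (2 * c) ^ 2 / 2) < 1 + 2 * c := LM_exp_lt (2 * c) (by linarith)
  have h2 : Real.exp (c - c ^ 2) < Real.sqrt (1 + 2 * c) := by
    have hsq : Real.exp (2 * c - (2 * c) ^ 2 / 2) = (Real.exp (c - c ^ 2)) ^ 2 := by
      rw [← Real.exp_nat_mul]; ring_nf
    have := Real.sqrt_lt_sqrt (by positivity) h1
    rwa [hsq, Real.sqrt_sq (Real.exp_pos _).le] at this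
  have hs : 0 < Real.sqrt (1 + 2 * c) := Real.sqrt_pos.mpr (by linarith)
  have hE : 0 < Real.exp (c - c ^ 2) := Real.exp_pos _
  have : (Real.sqrt (1 + 2 * c))⁻¹ < (Real.exp (c - c ^ 2))⁻¹ := by
    exact inv_strictAnti₀ hE h2
  calc Real.exp c * (Real.sqrt (1 + 2 * c))⁻¹
      < Real.exp c * (Real.exp (c - c ^ 2))⁻¹ := by
        exact mul_lt_mul_of_pos_left this (Real.exp_pos _)
    _ = Real.exp (c ^ 2) := by
        rw [← Real.exp_neg, ← Real.exp_add]; ring_nf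

/-- The non-strict version, valid for `c ≥ 0`. -/
lemma LM_factor_le (c : ℝ) (hc : 0 ≤ c) :
    Real.exp c * (Real.sqrt (1 + 2 * c))⁻¹ ≤ Real.exp (c ^ 2) := by
  rcases hc.eq_or_lt with h | h
  · simp [← h]
  · exact (LM_factor_lt c h).le

/-- Gaussian integral of `exp(-(c y²))` against the standard Gaussian. -/
lemma LM_gauss_sq_integral (c : ℝ) (hc : 0 ≤ c) :
    ∫ y, Real.exp (-(c * y ^ 2)) ∂(gaussianReal 0 1) = (Real.sqrt (1 + 2 * c))⁻¹ := by
  rw [gaussianReal_of_var_ne_zero 0 one_ne_zero]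
  have hpdf : gaussianPDF 0 1
      = fun x => ((Real.toNNReal (gaussianPDFReal 0 1 x) : NNReal) : ENNReal) := rfl
  rw [hpdf, integral_withDensity_eq_integral_smul
    ((measurable_gaussianPDFReal 0 1).real_toNNReal) _]
  have heq : ∀ x : ℝ, (Real.toNNReal (gaussianPDFReal 0 1 x) : NNReal)
      • Real.exp (-(c * x ^ 2))
      = (Real.sqrt (2 * π))⁻¹ * Real.exp (-(c + 2⁻¹) * x ^ 2) := by
    intro x
    rw [NNReal.smul_def, smul_eq_mul,
      Real.coe_toNNReal _ (gaussianPDFReal_nonneg 0 1 x)]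
    simp only [gaussianPDFReal, NNReal.coe_one, mul_one, sub_zero]
    rw [mul_assoc, ← Real.exp_add]
    congr 1
    ring
  simp_rw [heq]
  rw [integral_const_mul, integral_gaussian]
  have hπ : (0:ℝ) < π := Real.pi_pos
  have hc2 : (0:ℝ) < c + 2⁻¹ := by linarith
  rw [Real.sqrt_div hπ.le, Real.sqrt_mul (by norm_num : (0:ℝ) ≤ 2),
    show (1 + 2*c) = 2*(c+2⁻¹) by ring, Real.sqrt_mul (by norm_num : (0:ℝ) ≤ 2)]
  have h2 : (0:ℝ) < Real.sqrt 2 := Real.sqrt_pos.mpr (by norm_num)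
  have hp : (0:ℝ) < Real.sqrt π := Real.sqrt_pos.mpr hπ
  have hcc : (0:ℝ) < Real.sqrt (c + 2⁻¹) := Real.sqrt_pos.mpr hc2
  field_simp

/-- Laurent–Massart: for nonnegative weights `a_i` and i.i.d.
standard Gaussians `ε_i`,
`P(Σ a_i(ε_i² − 1) < −2‖a‖√x) < e^{−x}` for every `x > 0`. -/
theorem laurent_massart_lower_deviation
    {Ω : Type*} [MeasurableSpace Ω] (P : Measure Ω) [IsProbabilityMeasure P]
    (D : ℕ) (ε : Fin D → Ω → ℝ) (hεmeas : ∀ i, Measurable (ε i))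
    (hεindep : iIndepFun ε P)
    (hεgauss : ∀ i, Measure.map (ε i) P = gaussianReal 0 1)
    (a : Fin D → ℝ) (ha : ∀ i, 0 ≤ a i) (x : ℝ) (hx : 0 < x) :
    (P {ω | ∑ i, a i * ((ε i ω) ^ 2 - 1)
        < -2 * Real.sqrt (∑ i, (a i) ^ 2) * Real.sqrt x}).toReal
      < Real.exp (-x) := by
  classical
  by_cases hD : ∑ i, (a i) ^ 2 = 0
  · have hai : ∀ i, a i = 0 := by
      intro i
      have h := (Finset.sum_eq_zero_iff_of_nonneg
        (fun j _ => sq_nonneg (a j))).mp hD i (mem_univ i)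
      exact pow_eq_zero_iff two_ne_zero |>.mp h
    have hset : {ω | ∑ i, a i * ((ε i ω) ^ 2 - 1)
        < -2 * Real.sqrt (∑ i, (a i) ^ 2) * Real.sqrt x} = ∅ := by
      ext ω
      simp [hai, hD]
    rw [hset]
    simpa using Real.exp_pos (-x)
  · set σ2 := ∑ i, (a i) ^ 2 with hσ2
    have hσ2pos : 0 < σ2 :=
      lt_of_le_of_ne (Finset.sum_nonneg fun i _ => sq_nonneg _) (Ne.symm hD)
    set σ := Real.sqrt σ2 with hσ
    have hσpos : 0 < σ := Real.sqrt_pos.mpr hσ2pos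
    set l := Real.sqrt x / σ with hl
    have hlpos : 0 < l := div_pos (Real.sqrt_pos.mpr hx) hσpos
    set Y : Fin D → Ω → ℝ := fun i ω => a i * ((ε i ω) ^ 2 - 1) with hY
    have hYmeas : ∀ i, Measurable (Y i) := fun i =>
      (((hεmeas i).pow_const 2).sub measurable_const).const_mul (a i)
    have hYindep : iIndepFun Y P :=
      hεindep.comp (fun i y => a i * (y ^ 2 - 1))
        (fun i => ((measurable_id.pow_const 2).sub measurable_const).const_mul (a i))
    have hint : ∀ i, Integrable (fun ω => Real.exp (-l * Y i ω)) P := by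
      intro i
      refine Integrable.mono' (integrable_const (Real.exp (l * a i)))
        ((((hYmeas i).const_mul (-l)).exp).aestronglyMeasurable)
        (ae_of_all _ fun ω => ?_)
      rw [Real.norm_eq_abs, Real.abs_exp]
      apply Real.exp_le_exp.mpr
      have h1 := sq_nonneg (ε i ω)
      have h2 := ha i
      simp only [hY]
      nlinarith [hlpos.le, mul_nonneg (mul_nonneg hlpos.le h2) h1]
    have hmgf : ∀ i, mgf (Y i) P (-l)
        = Real.exp (l * a i) * (Real.sqrt (1 + 2 * (l * a i)))⁻¹ := by
      intro i
      have hmap : mgf (Y i) P (-l)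
          = ∫ y, Real.exp (-l * (a i * (y ^ 2 - 1))) ∂(Measure.map (ε i) P) := by
        rw [mgf, integral_map (hεmeas i).aemeasurable
          (Measurable.aestronglyMeasurable (by fun_prop))]
      rw [hmap, hεgauss i]
      have heq : ∀ y : ℝ, Real.exp (-l * (a i * (y ^ 2 - 1)))
          = Real.exp (l * a i) * Real.exp (-((l * a i) * y ^ 2)) := by
        intro y; rw [← Real.exp_add]; congr 1; ring
      simp_rw [heq]
      rw [integral_const_mul, LM_gauss_sq_integral (l * a i)
        (mul_nonneg hlpos.le (ha i))]
    have hexists : ∃ i ∈ Finset.univ (α := Fin D), 0 < a i := by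
      by_contra h
      push_neg at h
      refine hD (Finset.sum_eq_zero fun i hi => ?_)
      have h0 : a i = 0 := le_antisymm (h i hi) (ha i)
      simp [h0]
    have hprodlt : ∏ i, mgf (Y i) P (-l) < Real.exp x := by
      have hlt : ∏ i, mgf (Y i) P (-l) < ∏ i, Real.exp ((l * a i) ^ 2) := by
        refine Finset.prod_lt_prod (fun i _ => ?_) (fun i _ => ?_) ?_
        · rw [hmgf i]
          have : 0 < 1 + 2 * (l * a i) := by nlinarith [mul_nonneg hlpos.le (ha i)]
          positivity
        · rw [hmgf i]; exact LM_factor_le (l * a i) (mul_nonneg hlpos.le (ha i))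
        · obtain ⟨i, hi, hipos⟩ := hexists
          exact ⟨i, hi, by rw [hmgf i]; exact LM_factor_lt (l * a i) (mul_pos hlpos hipos)⟩
      have hl2 : l ^ 2 = x / σ2 := by
        rw [hl, div_pow, Real.sq_sqrt hx.le, hσ, Real.sq_sqrt hσ2pos.le]
      have hprodeq : ∏ i, Real.exp ((l * a i) ^ 2) = Real.exp x := by
        rw [← Real.exp_sum]
        congr 1
        have hsum : ∑ i, (l * a i) ^ 2 = l ^ 2 * σ2 := by
          simp_rw [mul_pow]
          rw [← Finset.mul_sum]
        rw [hsum, hl2]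
        field_simp
      rwa [hprodeq] at hlt
    have hintsum : Integrable (fun ω => Real.exp (-l * (∑ i, Y i) ω)) P :=
      hYindep.integrable_exp_mul_sum hYmeas (fun i _ => hint i)
    have hchern := measure_le_le_exp_mul_mgf (μ := P) (X := ∑ i, Y i)
      (-2 * σ * Real.sqrt x) (neg_nonpos.mpr hlpos.le) hintsum
    have hxx : Real.sqrt x * Real.sqrt x = x := Real.mul_self_sqrt hx.le
    have harg : -(-l) * (-2 * σ * Real.sqrt x) = -2 * x := by
      have : -(-l) * (-2 * σ * Real.sqrt x)
          = -2 * (Real.sqrt x * Real.sqrt x) * (σ / σ) := by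
        rw [hl]; ring
      rw [this, hxx, div_self hσpos.ne']
      ring
    have hsub : {ω | ∑ i, a i * ((ε i ω) ^ 2 - 1)
          < -2 * Real.sqrt (∑ i, (a i) ^ 2) * Real.sqrt x}
        ⊆ {ω | (∑ i, Y i) ω ≤ -2 * σ * Real.sqrt x} := by
      intro ω hω
      simp only [Set.mem_setOf_eq, Finset.sum_apply] at *
      exact hω.le
    calc (P {ω | ∑ i, a i * ((ε i ω) ^ 2 - 1)
          < -2 * Real.sqrt (∑ i, (a i) ^ 2) * Real.sqrt x}).toReal
        ≤ (P {ω | (∑ i, Y i) ω ≤ -2 * σ * Real.sqrt x}).toReal :=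
          ENNReal.toReal_mono (measure_ne_top _ _) (measure_mono hsub)
      _ ≤ Real.exp (-(-l) * (-2 * σ * Real.sqrt x)) * mgf (∑ i, Y i) P (-l) := hchern
      _ = Real.exp (-2 * x) * ∏ i, mgf (Y i) P (-l) := by
          rw [harg, hYindep.mgf_sum hYmeas]
      _ < Real.exp (-2 * x) * Real.exp x :=
          mul_lt_mul_of_pos_left hprodlt (Real.exp_pos _)
      _ = Real.exp (-x) := by rw [← Real.exp_add]; congr 1; ring
end

section
/- For p > 2 and t > 0, letting f_p denote the chi-squared density with p degrees of freedom, the L¹-distance between f_p and its translate satisfies ∫_0^∞ |f_p(x−t) − f_p(x)| dx ≤ 2^{(2−p)/2} / Γ(p/2) · t · (p−2)^{(p−2)/2} e^{−(p−2)/2}, which is further bounded by t·e/√(πp). -/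
open MeasureTheory Real Set


namespace ChiSqAux


lemma setIntegral_translate (f : ℝ → ℝ) (t : ℝ) (S : Set ℝ) (hS : MeasurableSet S) :
    ∫ x in S, f (x - t) = ∫ x in (fun x => x + t) ⁻¹' S, f x := by
  have hS' : MeasurableSet ((fun x => x + t) ⁻¹' S) := hS.preimage (by measurability)
  rw [← integral_indicator hS, ← integral_indicator hS']
  have h : ∀ x, S.indicator (fun x => f (x - t)) x
      = ((fun x => x + t) ⁻¹' S).indicator f (x - t) := by
    intro x
    by_cases hx : x ∈ S
    · rw [Set.indicator_of_mem hx, Set.indicator_of_mem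
        (by simpa [Set.mem_preimage, sub_add_cancel] using hx)]
    · rw [Set.indicator_of_notMem hx, Set.indicator_of_notMem
        (by simpa [Set.mem_preimage, sub_add_cancel] using hx)]
  simp_rw [h]
  exact integral_sub_right_eq_self (((fun x => x + t) ⁻¹' S).indicator f) t

lemma core_mono {a x y : ℝ} (ha : 0 < a) (hx : 0 < x) (hxy : x ≤ y) (hy : y ≤ 2 * a) :
    x ^ a * Real.exp (-x / 2) ≤ y ^ a * Real.exp (-y / 2) := by
  have hy0 : 0 < y := lt_of_lt_of_le hx hxy
  rw [Real.rpow_def_of_pos hx, Real.rpow_def_of_pos hy0, ← Real.exp_add, ← Real.exp_add,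
    Real.exp_le_exp]
  have h1 : Real.log x - Real.log y ≤ x / y - 1 := by
    rw [← Real.log_div hx.ne' hy0.ne']
    exact Real.log_le_sub_one_of_pos (div_pos hx hy0)
  have h3 : (Real.log x - Real.log y) * a ≤ (x / y - 1) * a :=
    mul_le_mul_of_nonneg_right h1 ha.le
  have h4 : (x / y - 1) * a ≤ (x - y) / 2 := by
    rw [div_sub_one hy0.ne', div_mul_eq_mul_div, div_le_div_iff₀ hy0 two_pos]
    nlinarith
  nlinarith

lemma core_anti {a x y : ℝ} (ha : 0 < a) (hx : 2 * a ≤ x) (hxy : x ≤ y) :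
    y ^ a * Real.exp (-y / 2) ≤ x ^ a * Real.exp (-x / 2) := by
  have hx0 : 0 < x := lt_of_lt_of_le (by linarith) hx
  have hy0 : 0 < y := lt_of_lt_of_le hx0 hxy
  rw [Real.rpow_def_of_pos hx0, Real.rpow_def_of_pos hy0, ← Real.exp_add, ← Real.exp_add,
    Real.exp_le_exp]
  have h1 : Real.log y - Real.log x ≤ (y - x) / x := by
    rw [← Real.log_div hy0.ne' hx0.ne']
    calc Real.log (y / x) ≤ y / x - 1 := Real.log_le_sub_one_of_pos (div_pos hy0 hx0)
      _ = (y - x) / x := by field_simp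
  have h3 : (Real.log y - Real.log x) * a ≤ (y - x) / x * a :=
    mul_le_mul_of_nonneg_right h1 ha.le
  have h4 : (y - x) / x * a ≤ (y - x) / 2 := by
    rw [div_mul_eq_mul_div, div_le_div_iff₀ hx0 two_pos]
    nlinarith
  nlinarith

lemma pow_helper {a c : ℝ} (k n : ℕ) (hn : 0 < n) (ha : 0 ≤ a) (hc : 0 ≤ c)
    (h : a ^ k * Real.exp (-1) ^ k ≤ c ^ n) :
    a ^ ((k : ℝ) / n) * Real.exp (-((k : ℝ) / n)) ≤ c := by
  have hn' : (n : ℝ) ≠ 0 := Nat.cast_ne_zero.mpr hn.ne'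
  refine le_of_pow_le_pow_left₀ hn.ne' hc ?_
  have e1 : (a ^ ((k : ℝ) / n)) ^ n = a ^ k := by
    rw [← Real.rpow_natCast (a ^ ((k : ℝ) / n)) n, ← Real.rpow_mul ha,
      div_mul_cancel₀ _ hn', Real.rpow_natCast]
  have e2 : (Real.exp (-((k : ℝ) / n))) ^ n = Real.exp (-1) ^ k := by
    rw [← Real.exp_nat_mul, ← Real.exp_nat_mul]
    congr 1
    field_simp
  rw [mul_pow, e1, e2]
  exact h

lemma yy_anti {a y : ℝ} (ha : 0 < a) (hay : a ≤ y) (hy1 : y ≤ 1) :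
    y ^ y * Real.exp (-y) ≤ a ^ a * Real.exp (-a) := by
  have hy0 : 0 < y := lt_of_lt_of_le ha hay
  have key : AntitoneOn (fun z : ℝ => z * Real.log z - z) (Set.Icc a 1) := by
    apply antitoneOn_of_deriv_nonpos (convex_Icc a 1)
    · exact (continuousOn_id.mul (Real.continuousOn_log.mono (by
        intro z hz
        exact ne_of_gt (lt_of_lt_of_le ha hz.1)))).sub continuousOn_id
    · intro z hz
      rw [interior_Icc] at hz
      have hz0 : z ≠ 0 := ne_of_gt (lt_trans ha hz.1)
      exact ((Real.hasDerivAt_mul_log hz0).sub (hasDerivAt_id' z)).differentiableAt.differentiableWithinAt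
    · intro z hz
      rw [interior_Icc] at hz
      have hz0 : 0 < z := lt_trans ha hz.1
      rw [(show HasDerivAt (fun z : ℝ => z * Real.log z - z) _ z from
        (Real.hasDerivAt_mul_log hz0.ne').sub (hasDerivAt_id' z)).deriv]
      have := Real.log_nonpos hz0.le hz.2.le
      linarith
  have h := key (Set.mem_Icc.mpr ⟨le_refl a, le_trans hay hy1⟩)
      (Set.mem_Icc.mpr ⟨hay, hy1⟩) hay
  rw [Real.rpow_def_of_pos hy0, Real.rpow_def_of_pos ha, ← Real.exp_add, ← Real.exp_add,
    Real.exp_le_exp]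
  simp only at h
  nlinarith
  
lemma yy_mono {b y : ℝ} (h1y : 1 ≤ y) (hyb : y ≤ b) :
    y ^ y * Real.exp (-y) ≤ b ^ b * Real.exp (-b) := by
  have hy0 : (0:ℝ) < y := lt_of_lt_of_le one_pos h1y
  have hb0 : (0:ℝ) < b := lt_of_lt_of_le hy0 hyb
  have key : MonotoneOn (fun z : ℝ => z * Real.log z - z) (Set.Icc 1 b) := by
    apply monotoneOn_of_deriv_nonneg (convex_Icc 1 b)
    · exact (continuousOn_id.mul (Real.continuousOn_log.mono (by
        intro z hz
        exact ne_of_gt (lt_of_lt_of_le one_pos hz.1)))).sub continuousOn_id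
    · intro z hz
      rw [interior_Icc] at hz
      have hz0 : z ≠ 0 := ne_of_gt (lt_trans one_pos hz.1)
      exact ((Real.hasDerivAt_mul_log hz0).sub (hasDerivAt_id' z)).differentiableAt.differentiableWithinAt
    · intro z hz
      rw [interior_Icc] at hz
      have hz0 : (1:ℝ) < z := hz.1
      rw [(show HasDerivAt (fun z : ℝ => z * Real.log z - z) _ z from
        (Real.hasDerivAt_mul_log (by linarith : z ≠ 0)).sub (hasDerivAt_id' z)).deriv]
      have := Real.log_nonneg hz0.le
      linarith
  have h := key (Set.mem_Icc.mpr ⟨h1y, hyb⟩)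
      (Set.mem_Icc.mpr ⟨le_trans h1y hyb, le_refl b⟩) hyb
  rw [Real.rpow_def_of_pos hy0, Real.rpow_def_of_pos hb0, ← Real.exp_add, ← Real.exp_add,
    Real.exp_le_exp]
  simp only at h
  nlinarith

lemma log_quadratic {u : ℝ} (hu : 0 ≤ u) : u - u ^ 2 / 2 ≤ Real.log (1 + u) := by
  have key : MonotoneOn (fun z : ℝ => Real.log (1 + z) - z + z ^ 2 / 2) (Set.Ici 0) := by
    apply monotoneOn_of_deriv_nonneg (convex_Ici 0)
    · apply ContinuousOn.add (ContinuousOn.sub ?_ continuousOn_id)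
        ((continuousOn_id.pow 2).div_const 2)
      apply ContinuousOn.log (continuousOn_const.add continuousOn_id)
      intro z hz
      have : (0:ℝ) ≤ z := hz
      intro hc
      simp only [Pi.add_apply, id_eq] at hc
      linarith
    · intro z hz
      rw [interior_Ici] at hz
      have hz0 : (0:ℝ) < z := hz
      have h1 : HasDerivAt (fun z : ℝ => Real.log (1 + z) - z + z ^ 2 / 2)
          (1 / (1 + z) - 1 + 2 * z ^ 1 / 2) z := by
        exact (((((hasDerivAt_id' z)).const_add (1:ℝ)).log (by linarith)).sub
          (hasDerivAt_id' z)).add ((hasDerivAt_pow 2 z).div_const 2)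
      exact h1.differentiableAt.differentiableWithinAt
    · intro z hz
      rw [interior_Ici] at hz
      have hz0 : (0:ℝ) < z := hz
      have h1 : HasDerivAt (fun z : ℝ => Real.log (1 + z) - z + z ^ 2 / 2)
          (1 / (1 + z) - 1 + 2 * z ^ 1 / 2) z := by
        exact (((((hasDerivAt_id' z)).const_add (1:ℝ)).log (by linarith)).sub
          (hasDerivAt_id' z)).add ((hasDerivAt_pow 2 z).div_const 2)
      rw [h1.deriv]
      have : 1 / (1 + z) - 1 + 2 * z ^ 1 / 2 = z ^ 2 / (1 + z) := by
        field_simp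
        ring
      rw [this]
      positivity
  have h := key (Set.mem_Ici.mpr (le_refl 0)) (Set.mem_Ici.mpr hu) hu
  simp only [Real.log_one, add_zero, pow_two] at h
  nlinarith [h]



lemma exp_neg_one_lt : Real.exp (-1) < 0.3678794412 := by
  have he_gt : (2.7182818283 : ℝ) < Real.exp 1 := Real.exp_one_gt_d9
  have hmulw : Real.exp (-1) * Real.exp 1 = 1 := by rw [← Real.exp_add]; norm_num
  nlinarith [Real.exp_pos (-1 : ℝ)]

lemma exp_neg_one_gt : (0.3678794411 : ℝ) < Real.exp (-1) := by
  have he_lt : Real.exp 1 < 2.7182818286 := Real.exp_one_lt_d9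
  have hmulw : Real.exp (-1) * Real.exp 1 = 1 := by rw [← Real.exp_add]; norm_num
  nlinarith [Real.exp_pos (-1 : ℝ), Real.exp_pos (1 : ℝ)]

lemma sub16 {y : ℝ} (h1 : 1 / 6 ≤ y) (hy1 : y ≤ 1) : y ^ y * Real.exp (-y) ≤ 0.63 := by
  have h := pow_helper (a := (1 : ℝ) / 6) (c := 0.63) 1 6 (by norm_num) (by norm_num)
    (by norm_num) (by nlinarith [exp_neg_one_lt, Real.exp_pos (-1 : ℝ)])
  norm_num at h
  refine le_trans (yy_anti (by norm_num) h1 hy1) ?_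
  norm_num
  exact h

lemma sub13 {y : ℝ} (h1 : 1 / 3 ≤ y) (hy1 : y ≤ 1) : y ^ y * Real.exp (-y) ≤ 0.497 := by
  have h := pow_helper (a := (1 : ℝ) / 3) (c := 0.497) 1 3 (by norm_num) (by norm_num)
    (by norm_num) (by nlinarith [exp_neg_one_lt, Real.exp_pos (-1 : ℝ)])
  norm_num at h
  refine le_trans (yy_anti (by norm_num) h1 hy1) ?_
  norm_num
  exact h

lemma sub12 {y : ℝ} (h1 : 1 / 2 ≤ y) (hy1 : y ≤ 1) : y ^ y * Real.exp (-y) ≤ 0.429 := by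
  have h := pow_helper (a := (1 : ℝ) / 2) (c := 0.429) 1 2 (by norm_num) (by norm_num)
    (by norm_num) (by nlinarith [exp_neg_one_lt, Real.exp_pos (-1 : ℝ)])
  norm_num at h
  refine le_trans (yy_anti (by norm_num) h1 hy1) ?_
  norm_num
  exact h

lemma sub34 {y : ℝ} (h1 : 3 / 4 ≤ y) (hy1 : y ≤ 1) : y ^ y * Real.exp (-y) ≤ 0.3808 := by
  have hwpos := Real.exp_pos (-1 : ℝ)
  have hexp3 : Real.exp (-1) ^ 3 ≤ 0.3678794412 ^ 3 :=
    pow_le_pow_left₀ hwpos.le exp_neg_one_lt.le 3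
  have h := pow_helper (a := (3 : ℝ) / 4) (c := 0.3808) 3 4 (by norm_num) (by norm_num)
    (by norm_num) (by nlinarith)
  norm_num at h
  refine le_trans (yy_anti (by norm_num) h1 hy1) ?_
  norm_num
  exact h

lemma sub54 {y : ℝ} (h1 : 1 ≤ y) (hy1 : y ≤ 5 / 4) : y ^ y * Real.exp (-y) ≤ 0.3789 := by
  have hwpos := Real.exp_pos (-1 : ℝ)
  have hexp5 : Real.exp (-1) ^ 5 ≤ 0.3678794412 ^ 5 :=
    pow_le_pow_left₀ hwpos.le exp_neg_one_lt.le 5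
  have h := pow_helper (a := (5 : ℝ) / 4) (c := 0.3789) 5 4 (by norm_num) (by norm_num)
    (by norm_num) (by nlinarith)
  norm_num at h
  refine le_trans (yy_mono h1 hy1) ?_
  norm_num
  exact h

lemma integral_exp_neg_Ioc {a b : ℝ} (hab : a ≤ b) :
    ∫ x in Ioc a b, Real.exp (-x) = Real.exp (-a) - Real.exp (-b) := by
  rw [← intervalIntegral.integral_of_le hab,
    intervalIntegral.integral_comp_neg (fun x => Real.exp x), integral_exp]

lemma exp_neg_intOn (a : ℝ) (S : Set ℝ) (hsub : S ⊆ Ioi a) :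
    IntegrableOn (fun x : ℝ => Real.exp (-x)) S := by
  apply IntegrableOn.mono_set _ hsub
  have := exp_neg_integrableOn_Ioi a (zero_lt_one)
  simpa only [neg_mul, one_mul] using this

section GammaFacts

lemma gamma_repr {y : ℝ} (hy : 0 < y) : Real.Gamma (y + 1) = ∫ x in Ioi (0 : ℝ), Real.exp (-x) * x ^ y := by
  rw [Real.Gamma_eq_integral (by linarith : (0 : ℝ) < y + 1)]
  simp [add_sub_cancel_right]

lemma gamma_intOn {y : ℝ} (hy : 0 < y) : IntegrableOn (fun x => Real.exp (-x) * x ^ y) (Ioi (0 : ℝ)) := by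
  have := Real.GammaIntegral_convergent (show (0 : ℝ) < y + 1 by linarith)
  simpa [add_sub_cancel_right] using this

lemma gamma_tail_le {y : ℝ} (hy : 0 < y) (c : ℝ) (hc : 0 ≤ c) :
    ∫ x in Ioi c, Real.exp (-x) * x ^ y ≤ Real.Gamma (y + 1) := by
  rw [gamma_repr hy]
  apply setIntegral_mono_set (gamma_intOn hy)
    ((ae_restrict_iff' measurableSet_Ioi).mpr (ae_of_all _ (fun x hx => by
      have : (0 : ℝ) < x := hx
      positivity)))
    (HasSubset.Subset.eventuallyLE (Ioi_subset_Ioi hc))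

lemma gamma_low1 {y : ℝ} (hy : 0 < y) : y ^ y * Real.exp (-y) ≤ Real.Gamma (y + 1) := by
  refine le_trans ?_ (gamma_tail_le hy y hy.le)
  have heq : ∫ x in Ioi y, Real.exp (-x) * y ^ y = y ^ y * Real.exp (-y) := by
    rw [integral_mul_const, integral_exp_neg_Ioi]; ring
  rw [← heq]
  apply setIntegral_mono_on
  · exact (exp_neg_intOn 0 (Ioi y) (Ioi_subset_Ioi hy.le)).mul_const _
  · exact (gamma_intOn hy).mono_set (Ioi_subset_Ioi hy.le)
  · exact measurableSet_Ioi
  · intro x hx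
    exact mul_le_mul_of_nonneg_left (Real.rpow_le_rpow hy.le (le_of_lt hx) hy.le)
      (Real.exp_pos _).le

lemma gamma_low2 {y : ℝ} (hy : 0 < y) : 1 / (y + 1) - 1 / (y + 2) + Real.exp (-1) ≤ Real.Gamma (y + 1) := by
  rw [gamma_repr hy, show Ioi (0 : ℝ) = Ioc 0 1 ∪ Ioi 1
      from (Ioc_union_Ioi_eq_Ioi zero_le_one).symm,
    setIntegral_union (Ioc_disjoint_Ioi le_rfl) measurableSet_Ioi
      ((gamma_intOn hy).mono_set Ioc_subset_Ioi_self)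
      ((gamma_intOn hy).mono_set (Ioi_subset_Ioi zero_le_one))]
  have i1 : IntegrableOn (fun x : ℝ => x ^ y) (Ioc (0 : ℝ) 1) := by
    rw [← intervalIntegrable_iff_integrableOn_Ioc_of_le zero_le_one]
    exact intervalIntegral.intervalIntegrable_rpow' (by linarith)
  have i2 : IntegrableOn (fun x : ℝ => x ^ (y + 1)) (Ioc (0 : ℝ) 1) := by
    rw [← intervalIntegrable_iff_integrableOn_Ioc_of_le zero_le_one]
    exact intervalIntegral.intervalIntegrable_rpow' (by linarith)
  have part1 : 1 / (y + 1) - 1 / (y + 2) ≤ ∫ x in Ioc (0 : ℝ) 1, Real.exp (-x) * x ^ y := by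
    have heq : ∫ x in Ioc (0 : ℝ) 1, (x ^ y - x ^ (y + 1)) = 1 / (y + 1) - 1 / (y + 2) := by
      rw [integral_sub i1 i2, ← intervalIntegral.integral_of_le zero_le_one,
        ← intervalIntegral.integral_of_le zero_le_one,
        integral_rpow (Or.inl (by linarith)), integral_rpow (Or.inl (by linarith)),
        Real.one_rpow, Real.zero_rpow (by linarith), Real.one_rpow,
        Real.zero_rpow (by linarith)]
      norm_num
      rw [show y + 1 + 1 = y + 2 by ring]
    rw [← heq]
    apply setIntegral_mono_on (i1.sub i2)
      ((gamma_intOn hy).mono_set Ioc_subset_Ioi_self) measurableSet_Ioc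
    intro x hx
    have hx0 : (0 : ℝ) < x := hx.1
    simp only [Pi.sub_apply]
    rw [Real.rpow_add_one hx0.ne']
    have h1 : 1 - x ≤ Real.exp (-x) := by
      have := Real.add_one_le_exp (-x)
      linarith
    have hxy0 : (0 : ℝ) ≤ x ^ y := Real.rpow_nonneg hx0.le y
    calc x ^ y - x ^ y * x = x ^ y * (1 - x) := by ring
      _ ≤ x ^ y * Real.exp (-x) := mul_le_mul_of_nonneg_left h1 hxy0
      _ = Real.exp (-x) * x ^ y := mul_comm _ _
  have part2 : Real.exp (-1) ≤ ∫ x in Ioi (1 : ℝ), Real.exp (-x) * x ^ y := by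
    rw [← integral_exp_neg_Ioi 1]
    apply setIntegral_mono_on
      (exp_neg_intOn 0 (Ioi 1) (Ioi_subset_Ioi zero_le_one))
      ((gamma_intOn hy).mono_set (Ioi_subset_Ioi zero_le_one)) measurableSet_Ioi
    intro x hx
    have hx1 : (1 : ℝ) ≤ x := le_of_lt hx
    nth_rewrite 1 [← mul_one (Real.exp (-x))]
    apply mul_le_mul_of_nonneg_left _ (Real.exp_pos _).le
    calc (1 : ℝ) = 1 ^ y := (Real.one_rpow y).symm
      _ ≤ x ^ y := Real.rpow_le_rpow zero_le_one hx1 hy.le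
  linarith

lemma gamma_low3 {y : ℝ} (h1y : 1 ≤ y) :
    Real.exp (-1) + Real.exp (-2) + Real.exp (-3) ≤ Real.Gamma (y + 1) := by
  have hy : (0:ℝ) < y := lt_of_lt_of_le zero_lt_one h1y
  refine le_trans ?_ (gamma_tail_le hy 1 zero_le_one)
  have hsub12 : Ioc (1:ℝ) 2 ⊆ Ioi 0 := fun x hx => lt_of_lt_of_le zero_lt_one hx.1.le
  have hsub23 : Ioc (2:ℝ) 3 ⊆ Ioi 0 := fun x hx => lt_trans zero_lt_two hx.1
  rw [show Ioi (1:ℝ) = Ioc 1 2 ∪ Ioi 2 from (Ioc_union_Ioi_eq_Ioi (by norm_num)).symm,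
    setIntegral_union (Ioc_disjoint_Ioi le_rfl) measurableSet_Ioi
      ((gamma_intOn hy).mono_set hsub12)
      ((gamma_intOn hy).mono_set (Ioi_subset_Ioi (by norm_num))),
    show Ioi (2:ℝ) = Ioc 2 3 ∪ Ioi 3 from (Ioc_union_Ioi_eq_Ioi (by norm_num)).symm,
    setIntegral_union (Ioc_disjoint_Ioi le_rfl) measurableSet_Ioi
      ((gamma_intOn hy).mono_set hsub23)
      ((gamma_intOn hy).mono_set (Ioi_subset_Ioi (by norm_num)))]
  have key : ∀ x : ℝ, 1 ≤ x → ∀ c : ℝ, 0 ≤ c → c ≤ x →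
      Real.exp (-x) * c ≤ Real.exp (-x) * x ^ y := by
    intro x hx c hc hcx
    apply mul_le_mul_of_nonneg_left _ (Real.exp_pos _).le
    calc c ≤ x := hcx
      _ = x ^ (1:ℝ) := (Real.rpow_one x).symm
      _ ≤ x ^ y := Real.rpow_le_rpow_of_exponent_le hx h1y
  have hp1 : Real.exp (-1) - Real.exp (-2) ≤ ∫ x in Ioc (1:ℝ) 2, Real.exp (-x) * x ^ y := by
    rw [← integral_exp_neg_Ioc (by norm_num : (1:ℝ) ≤ 2)]
    apply setIntegral_mono_on (exp_neg_intOn 0 _ hsub12)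
      ((gamma_intOn hy).mono_set hsub12) measurableSet_Ioc
    intro x hx
    have := key x hx.1.le 1 zero_le_one hx.1.le
    simpa using this
  have hp2 : 2 * (Real.exp (-2) - Real.exp (-3)) ≤ ∫ x in Ioc (2:ℝ) 3, Real.exp (-x) * x ^ y := by
    have heq : ∫ x in Ioc (2:ℝ) 3, Real.exp (-x) * 2 = 2 * (Real.exp (-2) - Real.exp (-3)) := by
      rw [integral_mul_const, integral_exp_neg_Ioc (by norm_num : (2:ℝ) ≤ 3)]; ring
    rw [← heq]
    apply setIntegral_mono_on ((exp_neg_intOn 0 _ hsub23).mul_const _)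
      ((gamma_intOn hy).mono_set hsub23) measurableSet_Ioc
    intro x hx
    exact key x (by linarith [hx.1]) 2 zero_le_two hx.1.le
  have hp3 : 3 * Real.exp (-3) ≤ ∫ x in Ioi (3:ℝ), Real.exp (-x) * x ^ y := by
    have heq : ∫ x in Ioi (3:ℝ), Real.exp (-x) * 3 = 3 * Real.exp (-3) := by
      rw [integral_mul_const, integral_exp_neg_Ioi]; ring
    rw [← heq]
    apply setIntegral_mono_on
      ((exp_neg_intOn 0 _ (Ioi_subset_Ioi (by norm_num))).mul_const _)
      ((gamma_intOn hy).mono_set (Ioi_subset_Ioi (by norm_num))) measurableSet_Ioi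
    intro x hx
    exact key x (by linarith [mem_Ioi.mp hx]) 3 (by norm_num) (le_of_lt hx)
  linarith

lemma gamma_low4 {y : ℝ} (h54 : 5 / 4 ≤ y) :
    y ^ y * Real.exp (-y) * (Real.sqrt (2 * π * y) / 2) ≤ Real.Gamma (y + 1) := by
  have hy : (0:ℝ) < y := by linarith
  refine le_trans ?_ (gamma_tail_le hy y hy.le)
  have hb : (0:ℝ) < (2 * y)⁻¹ := by positivity
  have hgauss : ∫ x in Ioi y, Real.exp (-((2 * y)⁻¹ * (x - y) ^ 2))
      = Real.sqrt (2 * π * y) / 2 := by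
    rw [setIntegral_translate (fun u => Real.exp (-((2 * y)⁻¹ * u ^ 2))) y (Ioi y)
      measurableSet_Ioi]
    rw [Set.preimage_add_const_Ioi, sub_self]
    rw [show (fun u : ℝ => Real.exp (-((2 * y)⁻¹ * u ^ 2)))
      = fun u : ℝ => Real.exp (-(2 * y)⁻¹ * u ^ 2) from funext (fun u => by ring_nf)]
    rw [integral_gaussian_Ioi]
    congr 2
    have h2y : (2:ℝ) * y ≠ 0 := by positivity
    field_simp
  have hmin : ∀ x ∈ Ioi y, y ^ y * Real.exp (-y) * Real.exp (-((2 * y)⁻¹ * (x - y) ^ 2))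
      ≤ Real.exp (-x) * x ^ y := by
    intro x hx
    have hxy : y ≤ x := le_of_lt hx
    have hx0 : (0:ℝ) < x := lt_of_lt_of_le hy hxy
    have hu : (0:ℝ) ≤ (x - y) / y := div_nonneg (by linarith) hy.le
    have hlog := log_quadratic hu
    have h1u : 1 + (x - y) / y = x / y := by field_simp; ring
    rw [h1u, Real.log_div hx0.ne' hy.ne'] at hlog
    rw [Real.rpow_def_of_pos hy, Real.rpow_def_of_pos hx0, ← Real.exp_add, ← Real.exp_add,
      ← Real.exp_add, Real.exp_le_exp]
    have e1 : ((x - y) / y) ^ 2 = (x - y) ^ 2 / y ^ 2 := by rw [div_pow]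
    rw [e1] at hlog
    have hmul := mul_le_mul_of_nonneg_right hlog hy.le
    have e2 : ((x - y) / y - (x - y) ^ 2 / y ^ 2 / 2) * y
        = (x - y) - (2 * y)⁻¹ * (x - y) ^ 2 := by
      field_simp
    have e3 : (Real.log x - Real.log y) * y = Real.log x * y - Real.log y * y := by ring
    rw [e2, e3] at hmul
    linarith
  calc y ^ y * Real.exp (-y) * (Real.sqrt (2 * π * y) / 2)
      = ∫ x in Ioi y, y ^ y * Real.exp (-y) * Real.exp (-((2 * y)⁻¹ * (x - y) ^ 2)) := by
        rw [integral_const_mul, hgauss]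
    _ ≤ ∫ x in Ioi y, Real.exp (-x) * x ^ y := by
        apply setIntegral_mono_on
        · apply Integrable.integrableOn
          apply Integrable.const_mul
          have := (integrable_exp_neg_mul_sq hb).comp_sub_right y
          simpa using this
        · exact (gamma_intOn hy).mono_set (Ioi_subset_Ioi hy.le)
        · exact measurableSet_Ioi
        · exact hmin

end GammaFacts

lemma sqrt_2pi_le {y S : ℝ} (hS : 0 ≤ S) (h : 2 * π * (y + 1) ≤ S ^ 2) :
    Real.sqrt (2 * π * (y + 1)) ≤ S :=
  Real.sqrt_le_iff.mpr ⟨hS, h⟩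

set_option maxHeartbeats 2000000 in
lemma gamma_key {y : ℝ} (hy : 0 < y) :
    Real.sqrt (2 * π * (y + 1)) * (y ^ y * Real.exp (-y)) ≤ Real.exp 1 * Real.Gamma (y + 1) := by
  have he_gt : (2.7182818283 : ℝ) < Real.exp 1 := Real.exp_one_gt_d9
  have hepos := Real.exp_pos (1 : ℝ)
  have hw_lt := exp_neg_one_lt
  have hw_gt := exp_neg_one_gt
  have hmulw : Real.exp (-1) * Real.exp 1 = 1 := by rw [← Real.exp_add]; norm_num
  have hpi_lt := Real.pi_lt_d4
  have hpi_gt := Real.pi_gt_d4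
  have hyy_pos : 0 < y ^ y * Real.exp (-y) := by positivity
  rcases le_or_gt y (1 / 6) with hc1 | hc1
  · have hsq : Real.sqrt (2 * π * (y + 1)) ≤ Real.exp 1 :=
      sqrt_2pi_le hepos.le (by nlinarith)
    calc Real.sqrt (2 * π * (y + 1)) * (y ^ y * Real.exp (-y))
        ≤ Real.exp 1 * (y ^ y * Real.exp (-y)) := mul_le_mul_of_nonneg_right hsq hyy_pos.le
      _ ≤ Real.exp 1 * Real.Gamma (y + 1) :=
          mul_le_mul_of_nonneg_left (gamma_low1 hy) hepos.le
  rcases le_or_gt y 1 with hc2 | hc2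
  · have hGlow := gamma_low2 hy
    have hq : ∀ b : ℝ, y ≤ b → 1 / ((b + 1) * (b + 2)) ≤ 1 / (y + 1) - 1 / (y + 2) := by
      intro b hyb
      have e1 : (1 : ℝ) / (y + 1) - 1 / (y + 2) = 1 / ((y + 1) * (y + 2)) := by
        field_simp
        norm_num
      rw [e1]
      apply one_div_le_one_div_of_le (by positivity)
      nlinarith
    have main : ∀ b S c : ℝ, y ≤ b → Real.sqrt (2 * π * (y + 1)) ≤ S →
        y ^ y * Real.exp (-y) ≤ c → 0 ≤ c →
        S * c ≤ Real.exp 1 * (1 / ((b + 1) * (b + 2))) + 1 →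
        Real.sqrt (2 * π * (y + 1)) * (y ^ y * Real.exp (-y))
          ≤ Real.exp 1 * Real.Gamma (y + 1) := by
      intro b S c hyb hS hc hc0 hnum
      calc Real.sqrt (2 * π * (y + 1)) * (y ^ y * Real.exp (-y))
          ≤ S * c := mul_le_mul hS hc (by positivity) (le_trans (Real.sqrt_nonneg _) hS)
        _ ≤ Real.exp 1 * (1 / ((b + 1) * (b + 2))) + 1 := hnum
        _ ≤ Real.exp 1 * (1 / (y + 1) - 1 / (y + 2) + Real.exp (-1)) := by
            have := hq b hyb
            nlinarith
        _ ≤ Real.exp 1 * Real.Gamma (y + 1) := mul_le_mul_of_nonneg_left hGlow hepos.le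
    rcases le_or_gt y (1 / 3) with hs | hs
    · exact main (1/3) 2.8945 0.63 hs (sqrt_2pi_le (by norm_num) (by nlinarith))
        (sub16 hc1.le hc2) (by norm_num) (by nlinarith)
    rcases le_or_gt y (1 / 2) with hs2 | hs2
    · exact main (1/2) 3.0701 0.497 hs2 (sqrt_2pi_le (by norm_num) (by nlinarith))
        (sub13 hs.le hc2) (by norm_num) (by nlinarith)
    rcases le_or_gt y (3 / 4) with hs3 | hs3
    · exact main (3/4) 3.3166 0.429 hs3 (sqrt_2pi_le (by norm_num) (by nlinarith))
        (sub12 hs2.le hc2) (by norm_num) (by nlinarith)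
    · exact main 1 3.5450 0.3808 hc2 (sqrt_2pi_le (by norm_num) (by nlinarith))
        (sub34 hs3.le hc2) (by norm_num) (by nlinarith)
  rcases le_or_gt y (5 / 4) with hc3 | hc3
  · have hGlow := gamma_low3 hc2.le
    have hw2 : Real.exp (-2) = Real.exp (-1) ^ 2 := by
      rw [← Real.exp_nat_mul]; norm_num
    have hw3 : Real.exp (-3) = Real.exp (-1) ^ 3 := by
      rw [← Real.exp_nat_mul]; norm_num
    have hS : Real.sqrt (2 * π * (y + 1)) ≤ 3.76 :=
      sqrt_2pi_le (by norm_num) (by nlinarith)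
    have hc := sub54 hc2.le hc3
    calc Real.sqrt (2 * π * (y + 1)) * (y ^ y * Real.exp (-y))
        ≤ 3.76 * 0.3789 := mul_le_mul hS hc (by positivity)
          (le_trans (Real.sqrt_nonneg _) hS)
      _ ≤ Real.exp 1 * (Real.exp (-1) + Real.exp (-2) + Real.exp (-3)) := by
          rw [hw2, hw3]
          nlinarith [Real.exp_pos (-1:ℝ)]
      _ ≤ Real.exp 1 * Real.Gamma (y + 1) := mul_le_mul_of_nonneg_left hGlow hepos.le
  · have hGlow := gamma_low4 hc3.le
    have hsq : Real.sqrt (2 * π * (y + 1)) ≤ Real.exp 1 * (Real.sqrt (2 * π * y) / 2) := by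
      have h1 : 2 * π * (y + 1) ≤ (Real.exp 1 / 2) ^ 2 * (2 * π * y) := by
        have he2 : (7.389 : ℝ) ≤ Real.exp 1 ^ 2 := by nlinarith
        have hpy : (0:ℝ) < π := Real.pi_pos
        have key0 : 4 * (y + 1) ≤ Real.exp 1 ^ 2 * y := by
          nlinarith [mul_le_mul_of_nonneg_right he2 (show (0:ℝ) ≤ y by linarith)]
        nlinarith [mul_le_mul_of_nonneg_left key0 (le_of_lt hpy)]
      calc Real.sqrt (2 * π * (y + 1)) ≤ Real.sqrt ((Real.exp 1 / 2) ^ 2 * (2 * π * y)) :=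
            Real.sqrt_le_sqrt h1
        _ = (Real.exp 1 / 2) * Real.sqrt (2 * π * y) := by
            rw [Real.sqrt_mul (by positivity), Real.sqrt_sq (by positivity)]
        _ = Real.exp 1 * (Real.sqrt (2 * π * y) / 2) := by ring
    calc Real.sqrt (2 * π * (y + 1)) * (y ^ y * Real.exp (-y))
        ≤ Real.exp 1 * (Real.sqrt (2 * π * y) / 2) * (y ^ y * Real.exp (-y)) :=
          mul_le_mul_of_nonneg_right hsq hyy_pos.le
      _ = Real.exp 1 * (y ^ y * Real.exp (-y) * (Real.sqrt (2 * π * y) / 2)) := by ring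
      _ ≤ Real.exp 1 * Real.Gamma (y + 1) := mul_le_mul_of_nonneg_left hGlow hepos.le



set_option maxHeartbeats 1000000 in
lemma main1 {p t : ℝ} (hp : 2 < p) (ht : 0 < t) (f : ℝ → ℝ)
    (hf : ∀ x : ℝ, f x =
      if 0 < x then x ^ (p / 2 - 1) * Real.exp (-x / 2)
          / (2 ^ (p / 2) * Real.Gamma (p / 2))
      else 0) :
    (∫ x in Set.Ioi (0 : ℝ), |f (x - t) - f x|) ≤ 2 * t * f (p - 2) := by
  set a : ℝ := p / 2 - 1 with ha_def
  set m : ℝ := p - 2 with hm_def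
  set C : ℝ := 2 ^ (p / 2) * Real.Gamma (p / 2) with hC_def
  have ha : 0 < a := by rw [ha_def]; linarith
  have hm : 0 < m := by rw [hm_def]; linarith
  have hma : m = 2 * a := by rw [hm_def, ha_def]; ring
  have hC : 0 < C := by
    rw [hC_def]
    have := Real.Gamma_pos_of_pos (show (0:ℝ) < p / 2 by linarith)
    positivity
  have hfval : ∀ x : ℝ, 0 < x → f x = x ^ a * Real.exp (-x / 2) / C := fun x hx => by
    rw [hf x, if_pos hx]
  have hfzero : ∀ x : ℝ, x ≤ 0 → f x = 0 := fun x hx => by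
    rw [hf x, if_neg (not_lt.mpr hx)]
  have hnn : ∀ x : ℝ, 0 ≤ f x := fun x => by
    rw [hf x]
    split
    · next hx => positivity
    · exact le_refl 0
  have hmono : ∀ x y : ℝ, x ≤ y → y ≤ m → f x ≤ f y := by
    intro x y hxy hym
    rcases le_or_gt x 0 with hx0 | hx0
    · rw [hfzero x hx0]; exact hnn y
    · have hy0 : 0 < y := lt_of_lt_of_le hx0 hxy
      rw [hfval x hx0, hfval y hy0]
      exact (div_le_div_iff_of_pos_right hC).mpr (core_mono ha hx0 hxy (hma ▸ hym))
  have hanti : ∀ x y : ℝ, m ≤ x → x ≤ y → f y ≤ f x := by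
    intro x y hmx hxy
    have hx0 : 0 < x := lt_of_lt_of_le hm hmx
    have hy0 : 0 < y := lt_of_lt_of_le hx0 hxy
    rw [hfval x hx0, hfval y hy0]
    exact (div_le_div_iff_of_pos_right hC).mpr (core_anti ha (hma ▸ hmx) hxy)
  have hmax : ∀ x : ℝ, f x ≤ f m := by
    intro x
    rcases le_total x m with h | h
    · exact hmono x m h le_rfl
    · exact hanti m x le_rfl h
  -- integrability
  have hint : Integrable f := by
    have h0 : IntegrableOn (fun x : ℝ => x ^ a * Real.exp (-(1/2) * x ^ (1:ℝ))) (Ioi 0) :=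
      integrableOn_rpow_mul_exp_neg_mul_rpow (by linarith) zero_lt_one (by norm_num)
    have h0' : IntegrableOn (fun x : ℝ => x ^ a * Real.exp (-x / 2)) (Ioi 0) := by
      apply h0.congr_fun _ measurableSet_Ioi
      intro x hx
      dsimp only
      rw [Real.rpow_one]
      ring_nf
    have h1 : IntegrableOn (fun x : ℝ => x ^ a * Real.exp (-x / 2) / C) (Ioi 0) :=
      Integrable.div_const h0' C
    have hfeq : f = (Ioi (0:ℝ)).indicator (fun x : ℝ => x ^ a * Real.exp (-x / 2) / C) := by
      funext x
      rw [hf x]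
      by_cases hx : 0 < x
      · rw [Set.indicator_of_mem (mem_Ioi.mpr hx), if_pos hx]
      · rw [Set.indicator_of_notMem (fun hc => hx (mem_Ioi.mp hc)), if_neg hx]
    rw [hfeq]
    exact (integrable_indicator_iff measurableSet_Ioi).mpr h1
  have hintt : Integrable (fun x => f (x - t)) := hint.comp_sub_right t
  have habs : Integrable (fun x => |f (x - t) - f x|) := (hintt.sub hint).abs
  -- translations
  have trA : ∫ x in Ioc (0:ℝ) m, f (x - t) = ∫ x in Ioc (0 - t) (m - t), f x := by
    rw [setIntegral_translate f t _ measurableSet_Ioc, Set.preimage_add_const_Ioc]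
  have trB : ∫ x in Ioc m (m + t), f (x - t) = ∫ x in Ioc (m - t) m, f x := by
    rw [setIntegral_translate f t _ measurableSet_Ioc, Set.preimage_add_const_Ioc,
      add_sub_cancel_right]
  have trC : ∫ x in Ioi (m + t), f (x - t) = ∫ x in Ioi m, f x := by
    rw [setIntegral_translate f t _ measurableSet_Ioi, Set.preimage_add_const_Ioi,
      add_sub_cancel_right]
  -- three pieces
  have stepA : ∫ x in Ioc (0:ℝ) m, |f (x - t) - f x|
      = (∫ x in Ioc (0:ℝ) m, f x) - ∫ x in Ioc (0 - t) (m - t), f x := by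
    rw [← trA, ← integral_sub hint.integrableOn hintt.integrableOn]
    apply setIntegral_congr_fun measurableSet_Ioc
    intro x hx
    dsimp only
    rw [abs_sub_comm, abs_of_nonneg (sub_nonneg.mpr (hmono (x - t) x (by linarith) hx.2))]
  have stepC : ∫ x in Ioi (m + t), |f (x - t) - f x|
      = (∫ x in Ioi m, f x) - ∫ x in Ioi (m + t), f x := by
    rw [← trC, ← integral_sub hintt.integrableOn hint.integrableOn]
    apply setIntegral_congr_fun measurableSet_Ioi
    intro x hx
    have hxm : m ≤ x - t := by have := mem_Ioi.mp hx; linarith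
    dsimp only
    rw [abs_of_nonneg (sub_nonneg.mpr (hanti (x - t) x hxm (by linarith)))]
  have stepB : ∫ x in Ioc m (m + t), |f (x - t) - f x|
      ≤ 2 * f m * t - ((∫ x in Ioc m (m + t), f x) + ∫ x in Ioc (m - t) m, f x) := by
    have hconst : IntegrableOn (fun _ : ℝ => 2 * f m) (Ioc m (m + t)) :=
      integrableOn_const (by rw [Real.volume_Ioc]; exact ENNReal.ofReal_ne_top)
    have hrhs_eq : ∫ x in Ioc m (m + t), (2 * f m - f x - f (x - t))
        = 2 * f m * t - ((∫ x in Ioc m (m + t), f x) + ∫ x in Ioc (m - t) m, f x) := by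
      have hFint : IntegrableOn (fun x => 2 * f m - f x) (Ioc m (m + t)) :=
        hconst.sub hint.integrableOn
      rw [integral_sub hFint hintt.integrableOn,
        integral_sub hconst hint.integrableOn, trB, setIntegral_const, Real.volume_real_Ioc_of_le (by linarith),
        add_sub_cancel_left, smul_eq_mul]
      ring
    rw [← hrhs_eq]
    apply setIntegral_mono_on habs.integrableOn
      ((hconst.sub hint.integrableOn).sub hintt.integrableOn) measurableSet_Ioc
    intro x hx
    simp only [Pi.sub_apply]
    rw [abs_le]
    constructor
    · have := hmax x
      linarith [hmax (x - t)]
    · have := hmax (x - t)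
      linarith [hmax x]
  -- combine
  have hsplit1 : Ioi (0:ℝ) = Ioc 0 m ∪ Ioi m := (Ioc_union_Ioi_eq_Ioi hm.le).symm
  have hsplit2 : Ioi m = Ioc m (m + t) ∪ Ioi (m + t) :=
    (Ioc_union_Ioi_eq_Ioi (by linarith)).symm
  rw [hsplit1, setIntegral_union (Ioc_disjoint_Ioi le_rfl) measurableSet_Ioi
      habs.integrableOn habs.integrableOn,
    hsplit2, setIntegral_union (Ioc_disjoint_Ioi le_rfl) measurableSet_Ioi
      habs.integrableOn habs.integrableOn, stepA, stepC]
  -- auxiliary unions for f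
  have u1 : (∫ x in Ioc (0 - t) (m - t), f x) + ∫ x in Ioc (m - t) m, f x
      = ∫ x in Ioc (0 - t) m, f x := by
    rw [← setIntegral_union (Ioc_disjoint_Ioc_of_le le_rfl) measurableSet_Ioc
      hint.integrableOn hint.integrableOn,
      Ioc_union_Ioc_eq_Ioc (by linarith) (by linarith)]
  have u2 : (∫ x in Ioc m (m + t), f x) + ∫ x in Ioi (m + t), f x = ∫ x in Ioi m, f x := by
    rw [← setIntegral_union (Ioc_disjoint_Ioi le_rfl) measurableSet_Ioi
      hint.integrableOn hint.integrableOn, Ioc_union_Ioi_eq_Ioi (by linarith)]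
  have u3 : (∫ x in Ioc (0:ℝ) m, f x) ≤ ∫ x in Ioc (0 - t) m, f x := by
    apply setIntegral_mono_set hint.integrableOn
      (ae_of_all _ hnn)
      (HasSubset.Subset.eventuallyLE (Ioc_subset_Ioc_left (by linarith)))
  linarith [stepB]


lemma part2final {p t : ℝ} (hp : 2 < p) (ht : 0 < t) :
    2 ^ ((2 - p) / 2) / Real.Gamma (p / 2) * t
        * (p - 2) ^ ((p - 2) / 2) * Real.exp (-(p - 2) / 2)
      ≤ t * Real.exp 1 / Real.sqrt (π * p) := by
  set y : ℝ := p / 2 - 1 with hy_def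
  have hy : 0 < y := by rw [hy_def]; linarith
  have e0 : p = 2 * y + 2 := by rw [hy_def]; ring
  have h2y : (0:ℝ) < 2 ^ y := Real.rpow_pos_of_pos two_pos y
  have hΓ : 0 < Real.Gamma (y + 1) := Real.Gamma_pos_of_pos (by linarith)
  have hsq : 0 < Real.sqrt (2 * π * (y + 1)) :=
    Real.sqrt_pos.mpr (by positivity)
  rw [show (2 - p) / 2 = -y from by rw [hy_def]; ring,
    show p / 2 = y + 1 from by rw [hy_def]; ring,
    show p - 2 = 2 * y from by rw [hy_def]; ring,
    show (2 * y) / 2 = y from by ring,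
    show -(2 * y) / 2 = -y from by ring,
    show π * p = 2 * π * (y + 1) from by rw [e0]; ring,
    Real.mul_rpow (by norm_num : (0:ℝ) ≤ 2) hy.le,
    Real.rpow_neg (by norm_num : (0:ℝ) ≤ 2)]
  have lhs_eq : (2 ^ y : ℝ)⁻¹ / Real.Gamma (y + 1) * t * (2 ^ y * y ^ y) * Real.exp (-y)
      = t * (y ^ y * Real.exp (-y)) / Real.Gamma (y + 1) := by
    field_simp
  rw [lhs_eq, div_le_div_iff₀ hΓ hsq]
  nlinarith [mul_le_mul_of_nonneg_left (gamma_key hy) ht.le, ht.le,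
    mul_pos (mul_pos ht hsq) (mul_pos (Real.rpow_pos_of_pos hy y) (Real.exp_pos (-y)))]

end ChiSqAux

open MeasureTheory Real






open MeasureTheory Real

/-- L¹-distance between the χ²(p) density and its translate.
For `p > 2`, `t > 0` and `f_p` the chi-squared density with `p` degrees of
freedom, `∫_0^∞ |f_p(x−t) − f_p(x)| dx ≤ 2^{(2−p)/2}/Γ(p/2) · t (p−2)^{(p−2)/2}
e^{−(p−2)/2} ≤ t e/√(πp)`. -/
theorem chi_squared_density_translate_L1
    (p t : ℝ) (hp : 2 < p) (ht : 0 < t)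
    (f : ℝ → ℝ)
    (hf : ∀ x : ℝ, f x =
      if 0 < x then x ^ (p / 2 - 1) * Real.exp (-x / 2)
          / (2 ^ (p / 2) * Real.Gamma (p / 2))
      else 0) :
    (∫ x in Set.Ioi (0 : ℝ), |f (x - t) - f x|)
        ≤ 2 ^ ((2 - p) / 2) / Real.Gamma (p / 2) * t
            * (p - 2) ^ ((p - 2) / 2) * Real.exp (-(p - 2) / 2)
      ∧ 2 ^ ((2 - p) / 2) / Real.Gamma (p / 2) * t
            * (p - 2) ^ ((p - 2) / 2) * Real.exp (-(p - 2) / 2)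
          ≤ t * Real.exp 1 / Real.sqrt (π * p) := by
  constructor
  · have hmain := ChiSqAux.main1 hp ht f hf
    have hBf : 2 ^ ((2 - p) / 2) / Real.Gamma (p / 2) * t
        * (p - 2) ^ ((p - 2) / 2) * Real.exp (-(p - 2) / 2) = 2 * t * f (p - 2) := by
      rw [hf (p - 2), if_pos (by linarith : (0:ℝ) < p - 2)]
      have hΓ : (0:ℝ) < Real.Gamma (p / 2) := Real.Gamma_pos_of_pos (by linarith)
      have h2p : (0:ℝ) < 2 ^ (p / 2) := Real.rpow_pos_of_pos two_pos _
      rw [show (2:ℝ) ^ ((2 - p) / 2) = 2 * ((2:ℝ) ^ (p / 2))⁻¹ from by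
        rw [show (2 - p) / 2 = 1 + -(p / 2) from by ring, Real.rpow_add two_pos,
          Real.rpow_one, Real.rpow_neg (by norm_num : (0:ℝ) ≤ 2)],
        show ((p:ℝ) - 2) ^ ((p - 2) / 2) = (p - 2) ^ (p / 2 - 1) from by
          rw [show (p - 2) / 2 = p / 2 - 1 from by ring]]
      field_simp
    rw [hBf]
    exact hmain
  · exact ChiSqAux.part2final hp ht
end

section
/- Under the polynomial spectral decay condition C_A^{-1} i^{-p} ≤ λ_i ≤ C_A i^{-p} for 1 ≤ i ≤ D, the interpolated strong variance V_t = δ²( Σ_{i=1}^{⌊t⌋} λ_i^{-2} + (t − ⌊t⌋) λ_{⌊t⌋+1}^{-2} ) satisfies, for all t ∈ [1,D], λ_{⌊t⌋+1}^{-2} t δ² ≤ (1+2p) 2^{2p+1} C_A⁴ V_t. -/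
open Real Finset

lemma sum_rpow_key (q : ℝ) (hq : 0 ≤ q) (n : ℕ) :
    (n : ℝ) ^ (q + 1) / (q + 1) ≤ ∑ i ∈ Finset.Icc 1 n, (i : ℝ) ^ q := by
  have hmono : MonotoneOn (fun x : ℝ => x ^ q) (Set.Icc (0:ℝ) (0 + n)) := by
    intro x hx y hy hxy
    exact Real.rpow_le_rpow hx.1 hxy hq
  have hint := hmono.integral_le_sum (f := fun x : ℝ => x ^ q) (x₀ := 0) (a := n)
  have hval : (∫ x in (0:ℝ)..(0 + n), x ^ q) = (n : ℝ) ^ (q + 1) / (q + 1) := by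
    rw [integral_rpow (Or.inl (by linarith))]
    rw [Real.zero_rpow (by linarith)]
    ring
  rw [hval] at hint
  refine hint.trans (le_of_eq ?_)
  rw [← Finset.Ico_add_one_right_eq_Icc, Finset.sum_Ico_eq_sum_range]
  simp only [Nat.add_sub_cancel, zero_add]
  apply Finset.sum_congr rfl
  intro i _
  push_cast
  ring_nf


lemma sq_rpow_helper (x p : ℝ) (hx : 0 ≤ x) : (x ^ p) ^ (2:ℕ) = x ^ (2 * p) := by
  rw [← Real.rpow_natCast (x ^ p) 2, ← Real.rpow_mul hx]
  norm_num [mul_comm]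

/-- under polynomial spectral decay `PSD(p, C_A)`, the interpolated
strong variance `V_t` satisfies `λ_{⌊t⌋+1}^{-2} t δ² ≤ (1+2p) 2^{2p+1} C_A⁴ V_t`
for all `t ∈ [1, D]`. -/
theorem interpolated_variance_lower_bound
    (D : ℕ) (p C_A δ t : ℝ) (lam : ℕ → ℝ)
    (hp : 0 ≤ p) (hCA : 1 ≤ C_A) (hδ : 0 < δ)
    (hPSD : ∀ i : ℕ, 1 ≤ i → i ≤ D →
      C_A⁻¹ * ((i : ℝ)) ^ (-p) ≤ lam i ∧ lam i ≤ C_A * ((i : ℝ)) ^ (-p))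
    (ht1 : 1 ≤ t) (ht2 : t ≤ D) (hfl : ⌊t⌋₊ + 1 ≤ D) :
    ((lam (⌊t⌋₊ + 1))⁻¹) ^ 2 * t * δ ^ 2
      ≤ (1 + 2 * p) * 2 ^ (2 * p + 1) * C_A ^ 4
          * (δ ^ 2 * ((∑ i ∈ Finset.Icc 1 ⌊t⌋₊, ((lam i)⁻¹) ^ 2)
              + (t - ⌊t⌋₊) * ((lam (⌊t⌋₊ + 1))⁻¹) ^ 2)) := by
  set n := ⌊t⌋₊ with hn
  have hCA0 : (0:ℝ) < C_A := lt_of_lt_of_le one_pos hCA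
  have hn1 : 1 ≤ n := Nat.le_floor (by exact_mod_cast ht1)
  have hn1' : (1:ℝ) ≤ (n:ℝ) := by exact_mod_cast hn1
  have hnt : (n:ℝ) ≤ t := Nat.floor_le (by linarith)
  have htn1 : t ≤ (n:ℝ) + 1 := le_of_lt (by exact_mod_cast Nat.lt_floor_add_one t)
  -- positivity of lam
  have hlam_pos : ∀ i : ℕ, 1 ≤ i → i ≤ D → 0 < lam i := by
    intro i h1 h2
    have := (hPSD i h1 h2).1
    have hi : (0:ℝ) < (i:ℝ) := by exact_mod_cast h1
    have : (0:ℝ) < C_A⁻¹ * (i:ℝ) ^ (-p) :=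
      mul_pos (inv_pos.mpr hCA0) (Real.rpow_pos_of_pos hi _)
    linarith [(hPSD i h1 h2).1]
  -- inverse lower bound on lam i : C_A⁻¹ i^p ≤ (lam i)⁻¹
  have hinv_lb : ∀ i : ℕ, 1 ≤ i → i ≤ D → C_A⁻¹ * (i:ℝ) ^ p ≤ (lam i)⁻¹ := by
    intro i h1 h2
    have hi : (0:ℝ) < (i:ℝ) := by exact_mod_cast h1
    have hpos := hlam_pos i h1 h2
    have hub := (hPSD i h1 h2).2
    rw [Real.rpow_neg hi.le] at hub
    have hle : (C_A * ((i:ℝ)^p)⁻¹)⁻¹ ≤ (lam i)⁻¹ := inv_anti₀ hpos hub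
    calc C_A⁻¹ * (i:ℝ)^p = (C_A * ((i:ℝ)^p)⁻¹)⁻¹ := by rw [mul_inv, inv_inv]
      _ ≤ (lam i)⁻¹ := hle
  -- inverse upper bound on lam (n+1)
  have hinv_ub : (lam (n+1))⁻¹ ≤ C_A * ((n:ℝ)+1) ^ p := by
    have h1 : 1 ≤ n + 1 := Nat.le_add_left 1 n
    have hi : (0:ℝ) < ((n:ℝ)+1) := by linarith
    have hlb := (hPSD (n+1) h1 hfl).1
    have hpos := hlam_pos (n+1) h1 hfl
    have hcast : ((n+1:ℕ):ℝ) = (n:ℝ)+1 := by push_cast; ring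
    rw [hcast, Real.rpow_neg hi.le] at hlb
    have hlbpos : 0 < C_A⁻¹ * (((n:ℝ)+1)^p)⁻¹ :=
      mul_pos (inv_pos.mpr hCA0) (inv_pos.mpr (Real.rpow_pos_of_pos hi p))
    have hle : (lam (n+1))⁻¹ ≤ (C_A⁻¹ * (((n:ℝ)+1)^p)⁻¹)⁻¹ := inv_anti₀ hlbpos hlb
    calc (lam (n+1))⁻¹ ≤ (C_A⁻¹ * (((n:ℝ)+1)^p)⁻¹)⁻¹ := hle
      _ = C_A * ((n:ℝ)+1) ^ p := by rw [mul_inv, inv_inv, inv_inv]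
  -- squared bounds
  have hA0 : 0 ≤ (lam (n+1))⁻¹ :=
    (inv_pos.mpr (hlam_pos (n+1) (Nat.le_add_left 1 n) hfl)).le
  have hA2 : ((lam (n+1))⁻¹)^2 ≤ C_A^2 * ((n:ℝ)+1) ^ (2*p) := by
    have hi : (0:ℝ) ≤ (n:ℝ)+1 := by linarith
    have := pow_le_pow_left₀ hA0 hinv_ub 2
    rw [mul_pow, sq_rpow_helper _ p hi] at this
    exact this
  -- sum lower bound
  have hS : C_A⁻¹^2 * ((n:ℝ)^(2*p+1)/(2*p+1)) ≤ ∑ i ∈ Finset.Icc 1 n, ((lam i)⁻¹)^2 := by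
    have h1 : C_A⁻¹^2 * ((n:ℝ)^(2*p+1)/(2*p+1)) ≤ C_A⁻¹^2 * ∑ i ∈ Finset.Icc 1 n, (i:ℝ)^(2*p) := by
      apply mul_le_mul_of_nonneg_left _ (by positivity)
      exact sum_rpow_key (2*p) (by linarith) n
    refine h1.trans ?_
    rw [Finset.mul_sum]
    apply Finset.sum_le_sum
    intro i hi
    rw [Finset.mem_Icc] at hi
    have hiD : i ≤ D := le_trans hi.2 (le_trans (Nat.le_succ n) hfl)
    have hi0 : (0:ℝ) ≤ (i:ℝ) := by positivity
    have := pow_le_pow_left₀ (by positivity) (hinv_lb i hi.1 hiD) 2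
    rw [mul_pow, sq_rpow_helper _ p hi0] at this
    exact this
  -- numeric assembly
  have hQ1 : (0:ℝ) < 2*p+1 := by linarith
  have h3 : ((lam (n+1))⁻¹)^2 * t ≤ C_A^2 * (2:ℝ)^(2*p+1) * (n:ℝ)^(2*p+1) := by
    calc ((lam (n+1))⁻¹)^2 * t ≤ (C_A^2 * ((n:ℝ)+1)^(2*p)) * ((n:ℝ)+1) :=
          mul_le_mul hA2 htn1 (by linarith) (by positivity)
      _ = C_A^2 * (((n:ℝ)+1)^(2*p) * ((n:ℝ)+1)^(1:ℝ)) := by rw [Real.rpow_one]; ring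
      _ = C_A^2 * ((n:ℝ)+1)^(2*p+1) := by rw [← Real.rpow_add (by linarith)]
      _ ≤ C_A^2 * (2*(n:ℝ))^(2*p+1) := by
          apply mul_le_mul_of_nonneg_left _ (by positivity)
          exact Real.rpow_le_rpow (by linarith) (by linarith) (by linarith)
      _ = C_A^2 * ((2:ℝ)^(2*p+1) * (n:ℝ)^(2*p+1)) := by
          rw [Real.mul_rpow (by norm_num) (by linarith)]
      _ = C_A^2 * (2:ℝ)^(2*p+1) * (n:ℝ)^(2*p+1) := by ring
  have hK0 : (0:ℝ) ≤ (1 + 2*p) * 2^(2*p+1) * C_A^4 := by positivity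
  have hextra : 0 ≤ (t - (n:ℝ)) * ((lam (n+1))⁻¹)^2 := by
    apply mul_nonneg (by linarith) (by positivity)
  calc ((lam (n+1))⁻¹)^2 * t * δ^2
      ≤ (C_A^2 * (2:ℝ)^(2*p+1) * (n:ℝ)^(2*p+1)) * δ^2 :=
        mul_le_mul_of_nonneg_right h3 (by positivity)
    _ = (1 + 2*p) * 2^(2*p+1) * C_A^4 * (δ^2 * (C_A⁻¹^2 * ((n:ℝ)^(2*p+1)/(2*p+1)))) := by
        field_simp
        ring
    _ ≤ (1 + 2*p) * 2^(2*p+1) * C_A^4 * (δ^2 * (∑ i ∈ Finset.Icc 1 n, ((lam i)⁻¹)^2)) := by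
        apply mul_le_mul_of_nonneg_left _ hK0
        exact mul_le_mul_of_nonneg_left hS (by positivity)
    _ ≤ (1 + 2*p) * 2^(2*p+1) * C_A^4
          * (δ^2 * ((∑ i ∈ Finset.Icc 1 n, ((lam i)⁻¹)^2) + (t - (n:ℝ)) * ((lam (n+1))⁻¹)^2)) := by
        apply mul_le_mul_of_nonneg_left _ hK0
        apply mul_le_mul_of_nonneg_left _ (by positivity)
        linarith
end

section
/- Let t* be the oracle-proxy index satisfying κ = Dδ² + B²_{t*,λ}(μ) − V_{t*,λ} (or the boundary case t* = m_0 with Dδ² + B²_{t*,λ}(μ) − V_{t*,λ} ≤ κ), and t_w the weakly balanced oracle t_w = inf{ t ≥ m_0 : B²_{t,λ}(μ) ≤ V_{t,λ} }. Then (B²_{t*,λ}(μ) − B²_{t_w,λ}(μ))_+ ≤ (κ − Dδ²)_+ and (V_{t*,λ} − V_{t_w,λ})_+ ≤ (Dδ² − κ)_+; consequently E[‖μ̂^(t*) − μ‖²_λ] ≤ E[‖μ̂^(t_w) − μ‖²_λ] + |κ − Dδ²|. -/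
open Real Finset

/-- Interpolated weak (squared) bias `B²_{t,λ}(μ)`. -/
noncomputable def weakBiasSq (D : ℕ) (lam μ : ℕ → ℝ) (t : ℝ) : ℝ :=
  (1 - Real.sqrt (t - ⌊t⌋₊)) ^ 2 * (lam (⌊t⌋₊ + 1)) ^ 2 * (μ (⌊t⌋₊ + 1)) ^ 2
    + ∑ i ∈ Finset.Icc (⌊t⌋₊ + 2) D, (lam i) ^ 2 * (μ i) ^ 2


noncomputable def wTail (D : ℕ) (lam μ : ℕ → ℝ) (n : ℕ) : ℝ :=
  ∑ i ∈ Finset.Icc n D, (lam i) ^ 2 * (μ i) ^ 2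

lemma wTail_nonneg (D : ℕ) (lam μ : ℕ → ℝ) (n : ℕ) : 0 ≤ wTail D lam μ n := by
  apply Finset.sum_nonneg; intro i _; positivity

lemma wTail_anti (D : ℕ) (lam μ : ℕ → ℝ) {n m : ℕ} (h : n ≤ m) :
    wTail D lam μ m ≤ wTail D lam μ n := by
  apply Finset.sum_le_sum_of_subset_of_nonneg
  · exact Finset.Icc_subset_Icc_left h
  · intro i _ _; positivity

lemma wTail_succ (D : ℕ) (lam μ : ℕ → ℝ) (hμ0 : ∀ i, D < i → μ i = 0) (n : ℕ) :
    wTail D lam μ n = (lam n) ^ 2 * (μ n) ^ 2 + wTail D lam μ (n + 1) := by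
  by_cases h : n ≤ D
  · rw [wTail, show Finset.Icc n D = insert n (Finset.Icc (n+1) D) by
      ext i; simp only [Finset.mem_insert, Finset.mem_Icc]; omega,
      Finset.sum_insert (by simp)]
    rfl
  · rw [wTail, wTail, hμ0 n (by omega), Finset.Icc_eq_empty (by omega),
      Finset.Icc_eq_empty (by omega)]
    simp

lemma sqrt_frac_le_one (t : ℝ) : Real.sqrt (t - ⌊t⌋₊) ≤ 1 := by
  rcases le_or_gt 0 t with h | h
  · have := Nat.lt_floor_add_one t
    have h1 : t - ⌊t⌋₊ ≤ 1 := by push_cast at this ⊢; linarith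
    calc Real.sqrt (t - ⌊t⌋₊) ≤ Real.sqrt 1 := Real.sqrt_le_sqrt h1
      _ = 1 := Real.sqrt_one
  · have : ⌊t⌋₊ = 0 := Nat.floor_eq_zero.mpr (by linarith [Nat.lt_floor_add_one t]; )
    rw [this]
    push_cast
    rw [sub_zero, Real.sqrt_eq_zero_of_nonpos h.le]
    norm_num

lemma coeff_mem (t : ℝ) :
    0 ≤ (1 - Real.sqrt (t - ⌊t⌋₊)) ^ 2 ∧ (1 - Real.sqrt (t - ⌊t⌋₊)) ^ 2 ≤ 1 := by
  have h1 := sqrt_frac_le_one t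
  have h0 := Real.sqrt_nonneg (t - ⌊t⌋₊)
  constructor
  · positivity
  · nlinarith

lemma weakBiasSq_eq (D : ℕ) (lam μ : ℕ → ℝ) (t : ℝ) :
    weakBiasSq D lam μ t = (1 - Real.sqrt (t - ⌊t⌋₊)) ^ 2 * (lam (⌊t⌋₊ + 1)) ^ 2 * (μ (⌊t⌋₊ + 1)) ^ 2
      + wTail D lam μ (⌊t⌋₊ + 2) := rfl
lemma weakBiasSq_le_tail (D : ℕ) (lam μ : ℕ → ℝ) (hμ0 : ∀ i, D < i → μ i = 0) (t : ℝ) :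
    weakBiasSq D lam μ t ≤ wTail D lam μ (⌊t⌋₊ + 1) := by
  rw [weakBiasSq_eq, wTail_succ D lam μ hμ0 (⌊t⌋₊ + 1)]
  have h := coeff_mem t
  have hb : (0:ℝ) ≤ (lam (⌊t⌋₊ + 1)) ^ 2 * (μ (⌊t⌋₊ + 1)) ^ 2 := by positivity
  have : (1 - Real.sqrt (t - ⌊t⌋₊)) ^ 2 * (lam (⌊t⌋₊ + 1)) ^ 2 * (μ (⌊t⌋₊ + 1)) ^ 2
      ≤ (lam (⌊t⌋₊ + 1)) ^ 2 * (μ (⌊t⌋₊ + 1)) ^ 2 := by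
    rw [mul_assoc]
    nlinarith [h.1, h.2]
  linarith

lemma tail_le_weakBiasSq (D : ℕ) (lam μ : ℕ → ℝ) (t : ℝ) :
    wTail D lam μ (⌊t⌋₊ + 2) ≤ weakBiasSq D lam μ t := by
  rw [weakBiasSq_eq]
  have h := (coeff_mem t).1
  nlinarith [sq_nonneg (lam (⌊t⌋₊ + 1)), sq_nonneg (μ (⌊t⌋₊ + 1)),
    mul_nonneg (mul_nonneg h (sq_nonneg (lam (⌊t⌋₊ + 1)))) (sq_nonneg (μ (⌊t⌋₊ + 1)))]

lemma weakBiasSq_antitone (D : ℕ) (lam μ : ℕ → ℝ) (hμ0 : ∀ i, D < i → μ i = 0) :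
    Antitone (weakBiasSq D lam μ) := by
  intro s t hst
  have hfl : ⌊s⌋₊ ≤ ⌊t⌋₊ := Nat.floor_mono hst
  rcases eq_or_lt_of_le hfl with heq | hlt
  · rw [weakBiasSq_eq, weakBiasSq_eq, ← heq]
    have hsq : Real.sqrt (s - ⌊s⌋₊) ≤ Real.sqrt (t - ⌊s⌋₊) := Real.sqrt_le_sqrt (by linarith)
    have h1 : Real.sqrt (t - ⌊s⌋₊) ≤ 1 := by rw [heq]; exact sqrt_frac_le_one t
    have h0 : (0:ℝ) ≤ Real.sqrt (s - ⌊s⌋₊) := Real.sqrt_nonneg _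
    have hc : (1 - Real.sqrt (t - ⌊s⌋₊)) ^ 2 ≤ (1 - Real.sqrt (s - ⌊s⌋₊)) ^ 2 := by nlinarith
    have hb : (0:ℝ) ≤ (lam (⌊s⌋₊ + 1)) ^ 2 * (μ (⌊s⌋₊ + 1)) ^ 2 := by positivity
    rw [mul_assoc, mul_assoc]
    have := mul_le_mul_of_nonneg_right hc hb
    linarith
  · calc weakBiasSq D lam μ t ≤ wTail D lam μ (⌊t⌋₊ + 1) := weakBiasSq_le_tail D lam μ hμ0 t
      _ ≤ wTail D lam μ (⌊s⌋₊ + 2) := wTail_anti D lam μ (by omega)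
      _ ≤ weakBiasSq D lam μ s := tail_le_weakBiasSq D lam μ s

lemma weakBiasSq_nat (D : ℕ) (lam μ : ℕ → ℝ) (hμ0 : ∀ i, D < i → μ i = 0) (n : ℕ) :
    weakBiasSq D lam μ (n : ℝ) = wTail D lam μ (n + 1) := by
  rw [weakBiasSq_eq, Nat.floor_natCast, sub_self, Real.sqrt_zero,
    wTail_succ D lam μ hμ0 (n + 1)]
  ring
lemma exists_left (D : ℕ) (lam μ : ℕ → ℝ) (hμ0 : ∀ i, D < i → μ i = 0)
    (t0 ε : ℝ) (ht0 : 0 < t0) (hε : 0 < ε) :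
    ∃ s, s < t0 ∧ weakBiasSq D lam μ s ≤ weakBiasSq D lam μ t0 + ε := by
  by_cases h : (⌊t0⌋₊ : ℝ) < t0
  · set n := ⌊t0⌋₊ with hn
    set f : ℝ → ℝ := fun u => (1 - Real.sqrt (u - n)) ^ 2 * (lam (n + 1)) ^ 2 * (μ (n + 1)) ^ 2
      + ∑ i ∈ Finset.Icc (n + 2) D, (lam i) ^ 2 * (μ i) ^ 2 with hf
    have hfeq : ∀ u : ℝ, ⌊u⌋₊ = n → weakBiasSq D lam μ u = f u := by
      intro u hu; rw [weakBiasSq, hu]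
    have hcont : ContinuousAt f t0 := by
      apply ContinuousAt.add _ continuousAt_const
      apply ContinuousAt.mul (ContinuousAt.mul _ continuousAt_const) continuousAt_const
      exact ((continuous_const.sub (Real.continuous_sqrt.comp
        (continuous_id.sub continuous_const))).continuousAt).pow 2
    have htend : Filter.Tendsto f (nhdsWithin t0 (Set.Iio t0)) (nhds (f t0)) :=
      hcont.tendsto.mono_left nhdsWithin_le_nhds
    have hev : ∀ᶠ u in nhdsWithin t0 (Set.Iio t0), f u < f t0 + ε :=
      htend.eventually_lt_const (by linarith)
    have hmem : Set.Ioo ((n : ℝ)) t0 ∈ nhdsWithin t0 (Set.Iio t0) :=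
      Ioo_mem_nhdsLT_of_mem ⟨h, le_rfl⟩
    obtain ⟨s, hs1, hs2⟩ := (hev.and (Filter.eventually_of_mem hmem fun x hx => hx)).exists
    refine ⟨s, hs2.2, ?_⟩
    have hflo : ⌊s⌋₊ = n := by
      rw [Nat.floor_eq_iff (le_trans (Nat.cast_nonneg n) hs2.1.le)]
      constructor
      · exact hs2.1.le
      · have := Nat.lt_floor_add_one t0
        push_cast at this ⊢
        linarith [hs2.2]
    rw [hfeq s hflo, hfeq t0 hn.symm]
    linarith [hs1]
  · have hn0 : (⌊t0⌋₊ : ℝ) = t0 := le_antisymm (Nat.floor_le ht0.le) (not_lt.mp h)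
    set n := ⌊t0⌋₊ with hn
    have hn1 : 1 ≤ n := by
      by_contra hc
      push_neg at hc
      interval_cases n
      rw [Nat.cast_zero] at hn0
      linarith
    set f : ℝ → ℝ := fun u => (1 - Real.sqrt (u - (n - 1 : ℕ))) ^ 2
        * (lam ((n - 1) + 1)) ^ 2 * (μ ((n - 1) + 1)) ^ 2
      + ∑ i ∈ Finset.Icc ((n - 1) + 2) D, (lam i) ^ 2 * (μ i) ^ 2 with hf
    have hfeq : ∀ u : ℝ, ⌊u⌋₊ = n - 1 → weakBiasSq D lam μ u = f u := by
      intro u hu; rw [weakBiasSq, hu]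
    have hcast : ((n - 1 : ℕ) : ℝ) = (n : ℝ) - 1 := by
      push_cast [hn1]; ring
    have hft0 : f t0 = weakBiasSq D lam μ t0 := by
      have h1 : t0 - ((n - 1 : ℕ) : ℝ) = 1 := by rw [hcast]; linarith
      have h2 : (n - 1) + 1 = n := by omega
      have h3 : (n - 1) + 2 = n + 1 := by omega
      rw [hf]
      simp only [h1, h2, h3, Real.sqrt_one, sub_self]
      rw [← hn0, weakBiasSq_nat D lam μ hμ0 n, wTail]
      ring
    have hcont : ContinuousAt f t0 := by
      apply ContinuousAt.add _ continuousAt_const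
      apply ContinuousAt.mul (ContinuousAt.mul _ continuousAt_const) continuousAt_const
      exact ((continuous_const.sub (Real.continuous_sqrt.comp
        (continuous_id.sub continuous_const))).continuousAt).pow 2
    have htend : Filter.Tendsto f (nhdsWithin t0 (Set.Iio t0)) (nhds (f t0)) :=
      hcont.tendsto.mono_left nhdsWithin_le_nhds
    have hev : ∀ᶠ u in nhdsWithin t0 (Set.Iio t0), f u < f t0 + ε :=
      htend.eventually_lt_const (by linarith)
    have hmem : Set.Ioo ((n : ℝ) - 1) t0 ∈ nhdsWithin t0 (Set.Iio t0) :=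
      Ioo_mem_nhdsLT_of_mem ⟨by linarith, le_rfl⟩
    obtain ⟨s, hs1, hs2⟩ := (hev.and (Filter.eventually_of_mem hmem fun x hx => hx)).exists
    refine ⟨s, hs2.2, ?_⟩
    have hflo : ⌊s⌋₊ = n - 1 := by
      rw [Nat.floor_eq_iff (by rw [← hcast] at hs2; exact le_trans (Nat.cast_nonneg _) hs2.1.le)]
      rw [hcast]
      constructor
      · exact hs2.1.le
      · have : (n : ℝ) - 1 + 1 = n := by ring
        rw [this]
        linarith [hs2.2]
    rw [hfeq s hflo]
    rw [hft0] at hs1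
    linarith
/-- comparison of the oracle-proxy index `t*` with the weakly
balanced oracle `t_w`:
`(B²_{t*,λ} − B²_{t_w,λ})_+ ≤ (κ − Dδ²)_+`, `(V_{t*,λ} − V_{t_w,λ})_+ ≤ (Dδ² − κ)_+`,
and hence `E‖μ̂^(t*) − μ‖²_λ ≤ E‖μ̂^(t_w) − μ‖²_λ + |κ − Dδ²|`
(using `E‖μ̂^(t) − μ‖²_λ = B²_{t,λ}(μ) + tδ²`). -/
theorem oracle_proxy_vs_weak_balanced_oracle
    (D m0 : ℕ) (hm0D : m0 ≤ D) (lam μ : ℕ → ℝ) (δ κ : ℝ) (hδ : 0 < δ) (hκ : 0 < κ)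
    (hμ0 : ∀ i, D < i → μ i = 0)
    (tstar tw : ℝ)
    (hts1 : (m0 : ℝ) ≤ tstar) (hts2 : tstar ≤ D)
    (hstar : κ = D * δ ^ 2 + weakBiasSq D lam μ tstar - tstar * δ ^ 2
      ∨ (tstar = m0 ∧ D * δ ^ 2 + weakBiasSq D lam μ tstar - tstar * δ ^ 2 ≤ κ))
    (htw : tw = sInf {t : ℝ | (m0 : ℝ) ≤ t ∧ weakBiasSq D lam μ t ≤ t * δ ^ 2})
    (htw2 : tw ≤ D) :
    max (weakBiasSq D lam μ tstar - weakBiasSq D lam μ tw) 0 ≤ max (κ - D * δ ^ 2) 0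
    ∧ max (tstar * δ ^ 2 - tw * δ ^ 2) 0 ≤ max (D * δ ^ 2 - κ) 0
    ∧ weakBiasSq D lam μ tstar + tstar * δ ^ 2
        ≤ weakBiasSq D lam μ tw + tw * δ ^ 2 + |κ - D * δ ^ 2| := by
  set B := weakBiasSq D lam μ with hB
  set S := {t : ℝ | (m0 : ℝ) ≤ t ∧ B t ≤ t * δ ^ 2} with hS
  have hδ2 : 0 < δ ^ 2 := by positivity
  have anti := weakBiasSq_antitone D lam μ hμ0
  have hBD : B (D : ℝ) = 0 := by
    rw [hB, weakBiasSq_nat D lam μ hμ0 D, wTail, Finset.Icc_eq_empty (by omega)]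
    simp
  have hDS : (D : ℝ) ∈ S := ⟨Nat.cast_le.mpr hm0D, by rw [hBD]; positivity⟩
  have hSne : S.Nonempty := ⟨(D : ℝ), hDS⟩
  have hbdd : BddBelow S := ⟨(m0 : ℝ), fun s hs => hs.1⟩
  have htw1 : (m0 : ℝ) ≤ tw := htw ▸ le_csInf hSne fun s hs => hs.1
  have key : ∀ t : ℝ, tw < t → B t ≤ t * δ ^ 2 := by
    intro t ht
    obtain ⟨s, hsS, hst⟩ := exists_lt_of_csInf_lt hSne (htw ▸ ht)
    calc B t ≤ B s := anti hst.le
      _ ≤ s * δ ^ 2 := hsS.2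
      _ ≤ t * δ ^ 2 := by nlinarith
  have hnotS : ∀ s : ℝ, (m0 : ℝ) ≤ s → s < tw → s * δ ^ 2 < B s := by
    intro s hs1 hs2
    by_contra hc
    push_neg at hc
    exact absurd (htw ▸ csInf_le hbdd ⟨hs1, hc⟩) (not_le.mpr hs2)
  have h2 : (m0 : ℝ) < tw → tw * δ ^ 2 ≤ B tw := by
    intro hm
    have htwpos : 0 < tw := lt_of_le_of_lt (Nat.cast_nonneg m0) hm
    refine le_of_forall_pos_le_add ?_
    intro ε hε
    obtain ⟨s, hs1, hs2⟩ := exists_left D lam μ hμ0 tw (ε / 2) htwpos (by linarith)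
    set s' := max s (max (m0 : ℝ) (tw - ε / (2 * δ ^ 2))) with hs'
    have hpos : 0 < ε / (2 * δ ^ 2) := by positivity
    have hs'lt : s' < tw := max_lt hs1 (max_lt hm (by linarith))
    have hs'm0 : (m0 : ℝ) ≤ s' := le_trans (le_max_left _ _) (le_max_right _ _)
    have hgap : tw - s' ≤ ε / (2 * δ ^ 2) := by
      have h1 : tw - ε / (2 * δ ^ 2) ≤ s' :=
        le_trans (le_max_right (m0 : ℝ) (tw - ε / (2 * δ ^ 2)))
          (le_max_right s (max (m0 : ℝ) (tw - ε / (2 * δ ^ 2))))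
      linarith
    have hBs' : B s' ≤ B tw + ε / 2 := le_trans (anti (le_max_left _ _)) hs2
    have hlt := hnotS s' hs'm0 hs'lt
    have hmul : (tw - s') * δ ^ 2 ≤ ε / 2 := by
      have := mul_le_mul_of_nonneg_right hgap hδ2.le
      have heq : ε / (2 * δ ^ 2) * δ ^ 2 = ε / 2 := by field_simp
      linarith
    nlinarith
  have habs : max (κ - D * δ ^ 2) 0 + max (D * δ ^ 2 - κ) 0 = |κ - D * δ ^ 2| := by
    rcases le_total (κ - D * δ ^ 2) 0 with h | h
    · rw [max_eq_right h, max_eq_left (by linarith), abs_of_nonpos h]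
      ring
    · rw [max_eq_left h, max_eq_right (by linarith), abs_of_nonneg h]
      ring
  have main : max (B tstar - B tw) 0 ≤ max (κ - D * δ ^ 2) 0
      ∧ max (tstar * δ ^ 2 - tw * δ ^ 2) 0 ≤ max (D * δ ^ 2 - κ) 0 := by
    rcases le_or_gt tstar tw with hle | hlt
    · have hkey : B tstar - tstar * δ ^ 2 ≤ κ - D * δ ^ 2 := by
        rcases hstar with h | ⟨_, h⟩ <;> linarith
      constructor
      · refine max_le ?_ (le_max_right _ _)
        rcases eq_or_lt_of_le hle with heq | hlt2
        · rw [heq]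
          have : B tw - B tw = 0 := sub_self _
          linarith [le_max_right (κ - D * δ ^ 2) (0:ℝ)]
        · have hm : (m0 : ℝ) < tw := lt_of_le_of_lt hts1 hlt2
          have h2' := h2 hm
          have : tstar * δ ^ 2 ≤ tw * δ ^ 2 := by nlinarith
          calc B tstar - B tw ≤ B tstar - tstar * δ ^ 2 := by linarith
            _ ≤ κ - D * δ ^ 2 := hkey
            _ ≤ max (κ - D * δ ^ 2) 0 := le_max_left _ _
      · refine max_le ?_ (le_max_right _ _)
        have : tstar * δ ^ 2 - tw * δ ^ 2 ≤ 0 := by nlinarith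
        linarith [le_max_right (D * δ ^ 2 - κ) (0:ℝ)]
    · rcases hstar with h | ⟨h1', _⟩
      swap
      · exfalso
        rw [h1'] at hlt
        linarith
      have hBt : B tstar ≤ tw * δ ^ 2 := by
        refine le_of_forall_pos_le_add ?_
        intro ε hε
        have hpos : 0 < ε / δ ^ 2 := by positivity
        set s := min tstar (tw + ε / δ ^ 2) with hs
        have hs1 : tw < s := lt_min hlt (by linarith)
        calc B tstar ≤ B s := anti (min_le_left _ _)
          _ ≤ s * δ ^ 2 := key s hs1
          _ ≤ (tw + ε / δ ^ 2) * δ ^ 2 := by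
              nlinarith [min_le_right tstar (tw + ε / δ ^ 2)]
          _ = tw * δ ^ 2 + ε := by field_simp
      constructor
      · refine max_le ?_ (le_max_right _ _)
        have := anti hlt.le
        linarith [le_max_right (κ - D * δ ^ 2) (0:ℝ)]
      · refine max_le ?_ (le_max_right _ _)
        have : tstar * δ ^ 2 - tw * δ ^ 2 ≤ D * δ ^ 2 - κ := by linarith
        exact le_trans this (le_max_left _ _)
  refine ⟨main.1, main.2, ?_⟩
  have e1 := le_trans (le_max_left (B tstar - B tw) 0) main.1
  have e2 := le_trans (le_max_left (tstar * δ ^ 2 - tw * δ ^ 2) 0) main.2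
  linarith
end

section
/- With t* the oracle-proxy index and t_w, t_s the weakly and strongly balanced oracle indices, it always holds that t* − (D − κδ^{-2})_+ ≤ t_w ≤ t_s. -/
open Real Finset

/-- Interpolated strong (squared) bias `B_t²(μ)`. -/
noncomputable def strongBiasSq (D : ℕ) (μ : ℕ → ℝ) (t : ℝ) : ℝ :=
  (1 - Real.sqrt (t - ⌊t⌋₊)) ^ 2 * (μ (⌊t⌋₊ + 1)) ^ 2
    + ∑ i ∈ Finset.Icc (⌊t⌋₊ + 2) D, (μ i) ^ 2

/-- Interpolated strong variance `V_t`. -/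
noncomputable def strongVar (lam : ℕ → ℝ) (δ t : ℝ) : ℝ :=
  (t - ⌊t⌋₊) * δ ^ 2 * ((lam (⌊t⌋₊ + 1))⁻¹) ^ 2
    + δ ^ 2 * ∑ i ∈ Finset.Icc 1 ⌊t⌋₊, ((lam i)⁻¹) ^ 2

lemma weakBiasSq_anti (D : ℕ) (lam μ : ℕ → ℝ) (hμ0 : ∀ i, D < i → μ i = 0)
    {s t : ℝ} (hs : 0 ≤ s) (hst : s ≤ t) :
    weakBiasSq D lam μ t ≤ weakBiasSq D lam μ s := by
  have ht : (0:ℝ) ≤ t := hs.trans hst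
  have hkl : ⌊s⌋₊ ≤ ⌊t⌋₊ := Nat.floor_le_floor hst
  have hfs0 : 0 ≤ s - ⌊s⌋₊ := sub_nonneg.2 (Nat.floor_le hs)
  have hft0 : 0 ≤ t - ⌊t⌋₊ := sub_nonneg.2 (Nat.floor_le ht)
  have hft1 : t - ⌊t⌋₊ ≤ 1 := by
    have := Nat.lt_floor_add_one t; linarith
  have hsq0 : (0:ℝ) ≤ Real.sqrt (t - ⌊t⌋₊) := Real.sqrt_nonneg _
  have hsq1 : Real.sqrt (t - ⌊t⌋₊) ≤ 1 := by
    rw [show (1:ℝ) = Real.sqrt 1 by simp]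
    exact Real.sqrt_le_sqrt hft1
  rcases eq_or_lt_of_le hkl with heq | hlt
  · -- same floor
    have hmono : Real.sqrt (s - ⌊s⌋₊) ≤ Real.sqrt (t - ⌊t⌋₊) := by
      rw [heq]; exact Real.sqrt_le_sqrt (by linarith)
    have hss1 : Real.sqrt (s - ⌊s⌋₊) ≤ 1 := hmono.trans hsq1
    have hss0 : 0 ≤ Real.sqrt (s - ⌊s⌋₊) := Real.sqrt_nonneg _
    have h1 : (1 - Real.sqrt (t - ⌊t⌋₊))^2 ≤ (1 - Real.sqrt (s - ⌊s⌋₊))^2 := by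
      nlinarith
    rw [heq] at hmono hss1 hss0 h1
    unfold weakBiasSq
    rw [heq]
    have h2 := mul_le_mul_of_nonneg_right h1
      (mul_nonneg (sq_nonneg (lam (⌊t⌋₊+1))) (sq_nonneg (μ (⌊t⌋₊+1))))
    nlinarith [h2]
  · -- floor strictly increases
    have key : weakBiasSq D lam μ t ≤ ∑ i ∈ Finset.Icc (⌊t⌋₊ + 1) D, (lam i)^2 * (μ i)^2 := by
      unfold weakBiasSq
      by_cases hD : ⌊t⌋₊ + 1 ≤ D
      · have hins : Finset.Icc (⌊t⌋₊ + 1) D = insert (⌊t⌋₊ + 1) (Finset.Icc (⌊t⌋₊ + 2) D) := by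
          ext x; simp [Finset.mem_Icc]; omega
        rw [hins, Finset.sum_insert (by simp [Finset.mem_Icc])]
        apply add_le_add _ le_rfl
        calc (1 - Real.sqrt (t - ⌊t⌋₊))^2 * (lam (⌊t⌋₊+1))^2 * (μ (⌊t⌋₊+1))^2
            ≤ 1 * (lam (⌊t⌋₊+1))^2 * (μ (⌊t⌋₊+1))^2 := by
              have h1 : (1 - Real.sqrt (t - ⌊t⌋₊))^2 ≤ 1 := by nlinarith
              have := mul_nonneg (sq_nonneg (lam (⌊t⌋₊+1))) (sq_nonneg (μ (⌊t⌋₊+1)))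
              nlinarith
          _ = (lam (⌊t⌋₊+1))^2 * (μ (⌊t⌋₊+1))^2 := by ring
      · have h1 : μ (⌊t⌋₊ + 1) = 0 := hμ0 _ (by omega)
        have h2 : Finset.Icc (⌊t⌋₊ + 2) D = ∅ := Finset.Icc_eq_empty (by omega)
        have h3 : Finset.Icc (⌊t⌋₊ + 1) D = ∅ := Finset.Icc_eq_empty (by omega)
        simp [h1, h2, h3]
    have key2 : ∑ i ∈ Finset.Icc (⌊t⌋₊ + 1) D, (lam i)^2 * (μ i)^2
        ≤ ∑ i ∈ Finset.Icc (⌊s⌋₊ + 2) D, (lam i)^2 * (μ i)^2 := by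
      apply Finset.sum_le_sum_of_subset_of_nonneg
      · apply Finset.Icc_subset_Icc_left; omega
      · intros; exact mul_nonneg (sq_nonneg _) (sq_nonneg _)
    have key3 : ∑ i ∈ Finset.Icc (⌊s⌋₊ + 2) D, (lam i)^2 * (μ i)^2 ≤ weakBiasSq D lam μ s := by
      unfold weakBiasSq
      have : 0 ≤ (1 - Real.sqrt (s - ⌊s⌋₊))^2 * (lam (⌊s⌋₊+1))^2 * (μ (⌊s⌋₊+1))^2 :=
        mul_nonneg (mul_nonneg (sq_nonneg _) (sq_nonneg _)) (sq_nonneg _)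
      linarith
    linarith

lemma strong_to_weak (D : ℕ) (lam μ : ℕ → ℝ) (δ : ℝ)
    (hlam_pos : ∀ i, 1 ≤ i → 0 < lam i)
    (hlam_mono : ∀ i j, 1 ≤ i → i ≤ j → lam j ≤ lam i)
    {t : ℝ} (ht : 0 ≤ t) (h : strongBiasSq D μ t ≤ strongVar lam δ t) :
    weakBiasSq D lam μ t ≤ t * δ ^ 2 := by
  set k := ⌊t⌋₊ with hk
  have hL : 0 < lam (k + 1) := hlam_pos (k+1) (by omega)
  have hfrac0 : 0 ≤ t - k := sub_nonneg.2 (Nat.floor_le ht)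
  -- weak ≤ lam(k+1)^2 * strong
  have h1 : weakBiasSq D lam μ t ≤ lam (k+1)^2 * strongBiasSq D μ t := by
    unfold weakBiasSq strongBiasSq
    rw [mul_add, Finset.mul_sum]
    apply add_le_add
    · apply le_of_eq; ring
    · apply Finset.sum_le_sum
      intro i hi
      simp only [Finset.mem_Icc] at hi
      have hle : lam i ≤ lam (k+1) := hlam_mono (k+1) i (by omega) (by omega)
      have hpos : 0 < lam i := hlam_pos i (by omega)
      have : lam i ^ 2 ≤ lam (k+1)^2 := by nlinarith
      nlinarith [sq_nonneg (μ i)]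
  -- lam(k+1)^2 * strongVar ≤ t * δ^2
  have h2 : lam (k+1)^2 * strongVar lam δ t ≤ t * δ ^ 2 := by
    have hsum : ∑ i ∈ Finset.Icc 1 k, ((lam i)⁻¹)^2 ≤ (k : ℝ) * ((lam (k+1))⁻¹)^2 := by
      calc ∑ i ∈ Finset.Icc 1 k, ((lam i)⁻¹)^2
          ≤ ∑ _i ∈ Finset.Icc 1 k, ((lam (k+1))⁻¹)^2 := by
            apply Finset.sum_le_sum
            intro i hi
            simp only [Finset.mem_Icc] at hi
            have hle : lam (k+1) ≤ lam i := hlam_mono i (k+1) (by omega) (by omega)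
            have hpos : 0 < lam i := hlam_pos i (by omega)
            have hinv : (lam i)⁻¹ ≤ (lam (k+1))⁻¹ := by
              apply inv_anti₀ hL hle
            have hinv0 : 0 ≤ (lam i)⁻¹ := by positivity
            nlinarith
        _ = (k : ℝ) * ((lam (k+1))⁻¹)^2 := by
            rw [Finset.sum_const, Nat.card_Icc]
            simp
    have hV : strongVar lam δ t ≤ t * δ^2 * ((lam (k+1))⁻¹)^2 := by
      unfold strongVar
      have hfloor : (k:ℝ) ≤ t := Nat.floor_le ht
      have h3 : δ^2 * ∑ i ∈ Finset.Icc 1 k, ((lam i)⁻¹)^2 ≤ δ^2 * ((k:ℝ) * ((lam (k+1))⁻¹)^2) :=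
        mul_le_mul_of_nonneg_left hsum (sq_nonneg δ)
      rw [← hk]
      nlinarith [h3]
    calc lam (k+1)^2 * strongVar lam δ t
        ≤ lam (k+1)^2 * (t * δ^2 * ((lam (k+1))⁻¹)^2) := by
          exact mul_le_mul_of_nonneg_left hV (sq_nonneg _)
      _ = t * δ^2 * (lam (k+1) * (lam (k+1))⁻¹)^2 := by ring
      _ = t * δ^2 := by rw [mul_inv_cancel₀ hL.ne']; ring
  calc weakBiasSq D lam μ t ≤ lam (k+1)^2 * strongBiasSq D μ t := h1
    _ ≤ lam (k+1)^2 * strongVar lam δ t := mul_le_mul_of_nonneg_left h (sq_nonneg _)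
    _ ≤ t * δ^2 := h2

/-- ordering of the oracle indices:
`t* − (D − κδ^{-2})_+ ≤ t_w ≤ t_s`. -/
theorem oracle_index_ordering
    (D m0 : ℕ) (hm0D : m0 ≤ D) (lam μ : ℕ → ℝ) (δ κ : ℝ) (hδ : 0 < δ) (hκ : 0 < κ)
    (hμ0 : ∀ i, D < i → μ i = 0)
    (hlam_pos : ∀ i, 1 ≤ i → 0 < lam i)
    (hlam_mono : ∀ i j, 1 ≤ i → i ≤ j → lam j ≤ lam i)
    (tstar tw ts : ℝ)
    (hts1 : (m0 : ℝ) ≤ tstar) (hts2 : tstar ≤ D)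
    (hstar : κ = D * δ ^ 2 + weakBiasSq D lam μ tstar - tstar * δ ^ 2
      ∨ (tstar = m0 ∧ D * δ ^ 2 + weakBiasSq D lam μ tstar - tstar * δ ^ 2 ≤ κ))
    (htw : tw = sInf {t : ℝ | (m0 : ℝ) ≤ t ∧ weakBiasSq D lam μ t ≤ t * δ ^ 2})
    (hts : ts = sInf {t : ℝ | (m0 : ℝ) ≤ t ∧ strongBiasSq D μ t ≤ strongVar lam δ t}) :
    tstar - max ((D : ℝ) - κ / δ ^ 2) 0 ≤ tw ∧ tw ≤ ts := by
  have hfD : ⌊(D:ℝ)⌋₊ = D := Nat.floor_natCast D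
  have hμD : μ (D + 1) = 0 := hμ0 _ (by omega)
  have hIccD : Finset.Icc (D + 2) D = (∅ : Finset ℕ) := Finset.Icc_eq_empty (by omega)
  have hDw : (m0:ℝ) ≤ (D:ℝ) ∧ weakBiasSq D lam μ (D:ℝ) ≤ (D:ℝ) * δ ^ 2 := by
    constructor
    · exact_mod_cast hm0D
    · unfold weakBiasSq
      rw [hfD, hμD, hIccD]
      simp
      positivity
  have hDs : (m0:ℝ) ≤ (D:ℝ) ∧ strongBiasSq D μ (D:ℝ) ≤ strongVar lam δ (D:ℝ) := by
    constructor
    · exact_mod_cast hm0D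
    · unfold strongBiasSq strongVar
      rw [hfD, hμD, hIccD]
      simp
      positivity
  have hbdd : BddBelow {t : ℝ | (m0 : ℝ) ≤ t ∧ weakBiasSq D lam μ t ≤ t * δ ^ 2} :=
    ⟨(m0:ℝ), fun x hx => hx.1⟩
  constructor
  · rw [htw]
    apply le_csInf ⟨(D:ℝ), hDw⟩
    rintro t ⟨ht1, ht2⟩
    have hmax0 : (0:ℝ) ≤ max ((D : ℝ) - κ / δ ^ 2) 0 := le_max_right _ _
    rcases hstar with h | ⟨h, _⟩
    · by_cases hc : tstar ≤ t
      · linarith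
      · push_neg at hc
        have ht0 : (0:ℝ) ≤ t := le_trans (Nat.cast_nonneg m0) ht1
        have hmono : weakBiasSq D lam μ tstar ≤ weakBiasSq D lam μ t :=
          weakBiasSq_anti D lam μ hμ0 ht0 hc.le
        have hB : weakBiasSq D lam μ tstar ≤ t * δ ^ 2 := hmono.trans ht2
        have hδ2 : (0:ℝ) < δ ^ 2 := by positivity
        have hκδ : (D:ℝ) - κ / δ ^ 2 = tstar - weakBiasSq D lam μ tstar / δ ^ 2 := by
          field_simp
          linarith [h]
        have hmax : (D:ℝ) - κ / δ ^ 2 ≤ max ((D : ℝ) - κ / δ ^ 2) 0 := le_max_left _ _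
        have : weakBiasSq D lam μ tstar / δ ^ 2 ≤ t := by
          rw [div_le_iff₀ hδ2]; linarith
        linarith
    · rw [h]; linarith
  · rw [htw, hts]
    apply csInf_le_csInf hbdd ⟨(D:ℝ), hDs⟩
    rintro t ⟨ht1, ht2⟩
    refine ⟨ht1, ?_⟩
    exact strong_to_weak D lam μ δ hlam_pos hlam_mono (le_trans (Nat.cast_nonneg m0) ht1) ht2
end
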